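/- arXiv:0806.3379 — 4 statements merged into one kernel-verified Lean document; each statement's English description precedes it below -/
import Mathlib

section
/- Let γ∈(−3,0). Define σ(z), for z∈ℝ³\{0}, as the 3×3 matrix |z|^{γ/2}·[[z₂,−z₃,0],[−z₁,0,z₃],[0,z₁,−z₂]], and σ(0)=0. There exists a constant C_γ>0 (one may take C_γ=|γ|/2+1) such that for all z,z̃∈ℝ³\{0}: ‖σ(z)−σ(z̃)‖ ≤ C_γ |z−z̃| ( |z|^{γ/2} + |z̃|^{γ/2} ), where ‖·‖ is the Frobenius norm on 3×3 real matrices. -/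
open scoped ENNReal

noncomputable section

abbrev E3 : Type := EuclideanSpace ℝ (Fin 3)

/-- The square root matrix `σ(z) = |z|^{γ/2} [[z₂,−z₃,0],[−z₁,0,z₃],[0,z₁,−z₂]]`
(with coordinates `z₁ = z 0`, `z₂ = z 1`, `z₃ = z 2`), and `σ(0)=0`. -/
def sigmaMat (γ : ℝ) (z : E3) : Matrix (Fin 3) (Fin 3) ℝ :=
  ‖z‖ ^ (γ / 2) • !![z 1, -(z 2), 0; -(z 0), 0, z 2; 0, z 0, -(z 1)]

/-- Frobenius norm of a 3×3 real matrix. -/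
def frobNorm (M : Matrix (Fin 3) (Fin 3) ℝ) : ℝ :=
  Real.sqrt (∑ i, ∑ j, (M i j) ^ 2)

/-- Mean value estimate for negative powers: `s^p - t^p ≤ (-p) s^{p-1} (t - s)`. -/
lemma mvt_rpow (p s t : ℝ) (hp : p < 0) (hs : 0 < s) (hst : s ≤ t) :
    s ^ p - t ^ p ≤ (-p) * s ^ (p - 1) * (t - s) := by
  have key : ‖(fun u : ℝ => u ^ p) t - (fun u : ℝ => u ^ p) s‖ ≤
      ((-p) * s ^ (p - 1)) * ‖t - s‖ := by
    apply (convex_Icc s t).norm_image_sub_le_of_norm_hasDerivWithin_le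
      (f' := fun u => p * u ^ (p - 1))
      (fun x hx => (Real.hasDerivAt_rpow_const
        (Or.inl (ne_of_gt (lt_of_lt_of_le hs hx.1)))).hasDerivWithinAt) ?_
      ⟨le_refl s, hst⟩ ⟨hst, le_refl t⟩
    intro x hx
    have hxpos : 0 < x := lt_of_lt_of_le hs hx.1
    have h1 : x ^ (p - 1) ≤ s ^ (p - 1) :=
      Real.rpow_le_rpow_of_nonpos hs hx.1 (by linarith)
    have h2 : (0:ℝ) ≤ x ^ (p - 1) := (Real.rpow_pos_of_pos hxpos _).le
    have : ‖p * x ^ (p - 1)‖ = (-p) * x ^ (p - 1) := by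
      rw [norm_mul, Real.norm_eq_abs, Real.norm_eq_abs, abs_of_neg hp,
        abs_of_nonneg h2]
    rw [this]
    exact mul_le_mul_of_nonneg_left h1 (by linarith)
  simp only [Real.norm_eq_abs] at key
  have h1 : s ^ p - t ^ p ≤ |t ^ p - s ^ p| := by
    rw [abs_sub_comm]; exact le_abs_self _
  have h2 : |t - s| = t - s := abs_of_nonneg (by linarith)
  calc s ^ p - t ^ p ≤ |t ^ p - s ^ p| := h1
    _ ≤ ((-p) * s ^ (p - 1)) * |t - s| := key
    _ = (-p) * s ^ (p - 1) * (t - s) := by rw [h2]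

/-- Key scalar inequality. -/
lemma key_scalar (p s t : ℝ) (hp : p < 0) (hs : 0 < s) (hst : s ≤ t) :
    (s ^ p - t ^ p) * t ≤ (2 + 2 * (-p)) * (t - s) * s ^ p := by
  have ht : 0 < t := lt_of_lt_of_le hs hst
  have hsp : 0 < s ^ p := Real.rpow_pos_of_pos hs _
  have htp : 0 < t ^ p := Real.rpow_pos_of_pos ht _
  have hspow : s ^ (p - 1) * s = s ^ p := by
    rw [← Real.rpow_add_one hs.ne' (p - 1)]; ring_nf
  rcases le_total t (2 * s) with h | h
  · -- t ≤ 2s : use MVT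
    have h1 : s ^ p - t ^ p ≤ (-p) * s ^ (p - 1) * (t - s) := mvt_rpow p s t hp hs hst
    have hnn : (0:ℝ) ≤ (-p) * s ^ (p - 1) * (t - s) := by
      have := (Real.rpow_pos_of_pos hs (p - 1)).le
      have : (0:ℝ) ≤ (-p) * s ^ (p - 1) := mul_nonneg (by linarith) this
      exact mul_nonneg this (by linarith)
    calc (s ^ p - t ^ p) * t ≤ ((-p) * s ^ (p - 1) * (t - s)) * t :=
          mul_le_mul_of_nonneg_right h1 ht.le
      _ ≤ ((-p) * s ^ (p - 1) * (t - s)) * (2 * s) :=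
          mul_le_mul_of_nonneg_left h hnn
      _ = 2 * (-p) * (t - s) * (s ^ (p - 1) * s) := by ring
      _ = 2 * (-p) * (t - s) * s ^ p := by rw [hspow]
      _ ≤ (2 + 2 * (-p)) * (t - s) * s ^ p := by
          have hnn2 : (0:ℝ) ≤ 2 * (t - s) * s ^ p :=
            mul_nonneg (by linarith) hsp.le
          nlinarith [hnn2]
  · -- 2s ≤ t
    have h1 : (s ^ p - t ^ p) * t ≤ s ^ p * t :=
      mul_le_mul_of_nonneg_right (by linarith) ht.le
    have h2 : t ≤ 2 * (t - s) := by linarith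
    calc (s ^ p - t ^ p) * t ≤ s ^ p * t := h1
      _ ≤ s ^ p * (2 * (t - s)) := mul_le_mul_of_nonneg_left h2 hsp.le
      _ = 2 * (t - s) * s ^ p := by ring
      _ ≤ (2 + 2 * (-p)) * (t - s) * s ^ p := by
          have hnn2 : (0:ℝ) ≤ 2 * (-p) * (t - s) * s ^ p :=
            mul_nonneg (mul_nonneg (by linarith) (by linarith)) hsp.le
          nlinarith [hnn2]

/-- Vector estimate, assuming `‖z‖ ≤ ‖w‖`. -/
lemma vec_est (p : ℝ) (hp : p < 0) (z w : E3) (hz : z ≠ 0) (hw : w ≠ 0)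
    (h : ‖z‖ ≤ ‖w‖) :
    ‖(‖z‖ ^ p) • z - (‖w‖ ^ p) • w‖ ≤
      (3 + 2 * (-p)) * ‖z - w‖ * (‖z‖ ^ p + ‖w‖ ^ p) := by
  set s := ‖z‖ with hsdef
  set t := ‖w‖ with htdef
  have hs : 0 < s := norm_pos_iff.mpr hz
  have ht : 0 < t := norm_pos_iff.mpr hw
  have hsp : 0 < s ^ p := Real.rpow_pos_of_pos hs _
  have htp : 0 < t ^ p := Real.rpow_pos_of_pos ht _
  have hab : t ^ p ≤ s ^ p := Real.rpow_le_rpow_of_nonpos hs h hp.le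
  have hsplit : (s ^ p) • z - (t ^ p) • w
      = (s ^ p) • (z - w) + (s ^ p - t ^ p) • w := by
    rw [smul_sub, sub_smul]; abel
  have hnorm1 : ‖(s ^ p) • (z - w)‖ = s ^ p * ‖z - w‖ := by
    rw [norm_smul, Real.norm_eq_abs, abs_of_pos hsp]
  have hnorm2 : ‖(s ^ p - t ^ p) • w‖ = (s ^ p - t ^ p) * t := by
    rw [norm_smul, Real.norm_eq_abs, abs_of_nonneg (by linarith)]
  have hts : t - s ≤ ‖z - w‖ := by
    have := abs_norm_sub_norm_le w z
    rw [← norm_neg (w - z), neg_sub] at this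
    calc t - s ≤ |t - s| := le_abs_self _
      _ ≤ ‖z - w‖ := this
  have hscal : (s ^ p - t ^ p) * t ≤ (2 + 2 * (-p)) * (t - s) * s ^ p :=
    key_scalar p s t hp hs h
  have hC : (0:ℝ) ≤ 2 + 2 * (-p) := by linarith
  calc ‖(s ^ p) • z - (t ^ p) • w‖
      ≤ ‖(s ^ p) • (z - w)‖ + ‖(s ^ p - t ^ p) • w‖ := by
        rw [hsplit]; exact norm_add_le _ _
    _ = s ^ p * ‖z - w‖ + (s ^ p - t ^ p) * t := by rw [hnorm1, hnorm2]
    _ ≤ s ^ p * ‖z - w‖ + (2 + 2 * (-p)) * (t - s) * s ^ p := by linarith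
    _ ≤ s ^ p * ‖z - w‖ + (2 + 2 * (-p)) * ‖z - w‖ * s ^ p := by
        have := mul_le_mul_of_nonneg_right
          (mul_le_mul_of_nonneg_left hts hC) hsp.le
        linarith
    _ = (3 + 2 * (-p)) * ‖z - w‖ * s ^ p := by ring
    _ ≤ (3 + 2 * (-p)) * ‖z - w‖ * (s ^ p + t ^ p) := by
        have h1 : (0:ℝ) ≤ (3 + 2 * (-p)) * ‖z - w‖ :=
          mul_nonneg (by linarith) (norm_nonneg _)
        exact mul_le_mul_of_nonneg_left (by linarith) h1

/-- Frobenius norm identity. -/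
lemma frob_eq (γ : ℝ) (z w : E3) :
    frobNorm (sigmaMat γ z - sigmaMat γ w) =
      Real.sqrt 2 * ‖(‖z‖ ^ (γ / 2)) • z - (‖w‖ ^ (γ / 2)) • w‖ := by
  set a := ‖z‖ ^ (γ / 2)
  set b := ‖w‖ ^ (γ / 2)
  have hnorm : ‖a • z - b • w‖
      = Real.sqrt ((a * z 0 - b * w 0) ^ 2 + (a * z 1 - b * w 1) ^ 2
          + (a * z 2 - b * w 2) ^ 2) := by
    rw [EuclideanSpace.norm_eq, Fin.sum_univ_three]
    congr 1
    simp [PiLp.sub_apply, PiLp.smul_apply, smul_eq_mul, Real.norm_eq_abs, sq_abs]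
  rw [frobNorm, hnorm, ← Real.sqrt_mul (by norm_num : (0:ℝ) ≤ 2)]
  congr 1
  rw [Fin.sum_univ_three]
  simp only [Fin.sum_univ_three, sigmaMat, Matrix.sub_apply, Matrix.smul_apply,
    Matrix.of_apply, Matrix.cons_val', Matrix.cons_val_zero, Matrix.cons_val_one,
    Matrix.head_cons, Matrix.empty_val', Matrix.cons_val_fin_one, Matrix.head_fin_const,
    Matrix.cons_val_two, Matrix.tail_cons, smul_eq_mul]
  ring

theorem sigma_lipschitz_estimate (γ : ℝ) (hγ : γ ∈ Set.Ioo (-3 : ℝ) 0) :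
    ∃ C : ℝ, 0 < C ∧
      ∀ z ztil : E3, z ≠ 0 → ztil ≠ 0 →
        frobNorm (sigmaMat γ z - sigmaMat γ ztil) ≤
          C * ‖z - ztil‖ * (‖z‖ ^ (γ / 2) + ‖ztil‖ ^ (γ / 2)) := by
  obtain ⟨hγ1, hγ2⟩ := hγ
  have hp : γ / 2 < 0 := by linarith
  set p := γ / 2 with hpdef
  refine ⟨Real.sqrt 2 * (3 + 2 * (-p)), ?_, ?_⟩
  · apply mul_pos (Real.sqrt_pos.mpr (by norm_num)); linarith
  intro z ztil hz hztil
  rw [frob_eq]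
  rcases le_total ‖z‖ ‖ztil‖ with h | h
  · have := vec_est p hp z ztil hz hztil h
    calc Real.sqrt 2 * ‖(‖z‖ ^ p) • z - (‖ztil‖ ^ p) • ztil‖
        ≤ Real.sqrt 2 * ((3 + 2 * (-p)) * ‖z - ztil‖ * (‖z‖ ^ p + ‖ztil‖ ^ p)) :=
          mul_le_mul_of_nonneg_left this (Real.sqrt_nonneg 2)
      _ = Real.sqrt 2 * (3 + 2 * (-p)) * ‖z - ztil‖ * (‖z‖ ^ p + ‖ztil‖ ^ p) := by ring
  · have := vec_est p hp ztil z hztil hz h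
    have hsym1 : ‖(‖z‖ ^ p) • z - (‖ztil‖ ^ p) • ztil‖
        = ‖(‖ztil‖ ^ p) • ztil - (‖z‖ ^ p) • z‖ := norm_sub_rev _ _
    have hsym2 : ‖ztil - z‖ = ‖z - ztil‖ := norm_sub_rev _ _
    rw [hsym1]
    calc Real.sqrt 2 * ‖(‖ztil‖ ^ p) • ztil - (‖z‖ ^ p) • z‖
        ≤ Real.sqrt 2 * ((3 + 2 * (-p)) * ‖ztil - z‖ * (‖ztil‖ ^ p + ‖z‖ ^ p)) :=
          mul_le_mul_of_nonneg_left this (Real.sqrt_nonneg 2)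
      _ = Real.sqrt 2 * (3 + 2 * (-p)) * ‖z - ztil‖ * (‖z‖ ^ p + ‖ztil‖ ^ p) := by
          rw [hsym2]; ring

end
end

section
/- Let γ∈[−2,0) and let E₀>0, H₀>0. There exists a constant c>0, depending only on γ, E₀ and H₀, such that for every nonnegative measurable function f on ℝ³ with ∫_{ℝ³} f(v)dv=1, ∫_{ℝ³}|v|² f(v)dv ≤ E₀ and ∫_{ℝ³} f(v)log f(v) dv ≤ H₀, and for all v,ξ∈ℝ³: Σ_{i,j=1}^3 ā^f_{ij}(v) ξ_i ξ_j ≥ c (1+|v|)^γ |ξ|², where ā^f_{ij}(v) := ∫_{ℝ³} a_{ij}(v−v_*) f(v_*) dv_* and a_{ij}(z)=|z|^γ(|z|²δ_{ij}−z_i z_j). -/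
open MeasureTheory
open scoped ENNReal

noncomputable section

/-- The entries of the matrix `a(z) = |z|^γ (|z|² Id − z ⊗ z)`. -/
def aCoef (γ : ℝ) (z : E3) (i j : Fin 3) : ℝ :=
  ‖z‖ ^ γ * (‖z‖ ^ (2:ℕ) * (if i = j then 1 else 0) - z i * z j)

open Real
open scoped RealInnerProductSpace

/-! ### Auxiliary lemmas -/

lemma norm_sq_eq (x : E3) : ‖x‖ ^ (2:ℕ) = ∑ i, (x i)^2 := by
  rw [EuclideanSpace.norm_eq, Real.sq_sqrt (by positivity)]
  simp [sq_abs]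

lemma abs_coord_le (x : E3) (i : Fin 3) : |x i| ≤ ‖x‖ := by
  have h : (x i)^2 ≤ ‖x‖ ^ (2:ℕ) := by
    rw [norm_sq_eq]
    exact Finset.single_le_sum (f := fun j => (x j)^2) (fun j _ => sq_nonneg _) (Finset.mem_univ i)
  calc |x i| = Real.sqrt ((x i)^2) := (Real.sqrt_sq_eq_abs _).symm
  _ ≤ Real.sqrt (‖x‖^(2:ℕ)) := Real.sqrt_le_sqrt h
  _ = ‖x‖ := by rw [Real.sqrt_sq (norm_nonneg _)]

lemma innerSum3 (z u : E3) : ⟪z, u⟫ = ∑ i, z i * u i := by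
  simp [PiLp.inner_apply, RCLike.inner_apply, mul_comm]

lemma rpow_mul_sq_le {γ : ℝ} (hγ : -2 ≤ γ) (hγ' : γ < 0) {x : ℝ} (hx : 0 ≤ x) :
    x ^ γ * x ^ (2:ℕ) ≤ 1 + x ^ (2:ℕ) := by
  rcases eq_or_lt_of_le hx with h0 | h0
  · rw [← h0]
    simp [Real.zero_rpow (ne_of_lt hγ')]
  · have key : x ^ γ * x ^ (2:ℕ) = x ^ (γ + 2) := by
      rw [← Real.rpow_natCast x 2, ← Real.rpow_add h0]
      norm_num
    rw [key]
    rcases le_total x 1 with hx1 | hx1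
    · have : x ^ (γ + 2) ≤ 1 := Real.rpow_le_one hx hx1 (by linarith)
      nlinarith [sq_nonneg x]
    · have : x ^ (γ + 2) ≤ x ^ ((2:ℕ):ℝ) := by
        apply Real.rpow_le_rpow_of_exponent_le hx1
        push_cast; linarith
      rw [Real.rpow_natCast] at this
      nlinarith

lemma abs_aCoef_le {γ : ℝ} (hγ : -2 ≤ γ) (hγ' : γ < 0) (z : E3) (i j : Fin 3) :
    |aCoef γ z i j| ≤ 2 * (1 + ‖z‖ ^ (2:ℕ)) := by
  have h1 : |‖z‖ ^ (2:ℕ) * (if i = j then 1 else 0) - z i * z j| ≤ 2 * ‖z‖ ^ (2:ℕ) := by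
    have h2 : |z i * z j| ≤ ‖z‖ ^ (2:ℕ) := by
      rw [abs_mul]
      calc |z i| * |z j| ≤ ‖z‖ * ‖z‖ :=
        mul_le_mul (abs_coord_le z i) (abs_coord_le z j) (abs_nonneg _) (norm_nonneg _)
      _ = ‖z‖ ^ (2:ℕ) := (sq ‖z‖).symm
    have h3 : |‖z‖ ^ (2:ℕ) * (if i = j then 1 else 0)| ≤ ‖z‖ ^ (2:ℕ) := by
      split_ifs <;> simp [abs_of_nonneg (sq_nonneg ‖z‖)]
    calc |‖z‖ ^ (2:ℕ) * (if i = j then 1 else 0) - z i * z j|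
        ≤ |‖z‖ ^ (2:ℕ) * (if i = j then 1 else 0)| + |z i * z j| := abs_sub _ _
      _ ≤ 2 * ‖z‖ ^ (2:ℕ) := by linarith
  have h4 : 0 ≤ ‖z‖ ^ γ := Real.rpow_nonneg (norm_nonneg _) _
  calc |aCoef γ z i j| = ‖z‖ ^ γ * |‖z‖ ^ (2:ℕ) * (if i = j then 1 else 0) - z i * z j| := by
        rw [aCoef, abs_mul, abs_of_nonneg h4]
    _ ≤ ‖z‖ ^ γ * (2 * ‖z‖ ^ (2:ℕ)) := by
        apply mul_le_mul_of_nonneg_left h1 h4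
    _ = 2 * (‖z‖ ^ γ * ‖z‖ ^ (2:ℕ)) := by ring
    _ ≤ 2 * (1 + ‖z‖ ^ (2:ℕ)) := by
        have := rpow_mul_sq_le hγ hγ' (norm_nonneg z)
        linarith

lemma sum_aCoef (γ : ℝ) (z u : E3) :
    ∑ i, ∑ j, aCoef γ z i j * u i * u j
      = ‖z‖ ^ γ * (‖z‖ ^ (2:ℕ) * (∑ i, (u i)^2) - (∑ i, z i * u i)^2) := by
  simp only [aCoef, Fin.sum_univ_three]
  norm_num [Fin.ext_iff]
  ring

lemma Q_nonneg (z u : E3) (hu : ‖u‖ = 1) :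
    0 ≤ ‖z‖ ^ (2:ℕ) - (∑ i, z i * u i)^2 := by
  have h := abs_real_inner_le_norm z u
  rw [hu, mul_one] at h
  rw [← innerSum3]
  have : ⟪z, u⟫^2 ≤ ‖z‖^2 := by
    rw [← sq_abs]
    exact pow_le_pow_left₀ (abs_nonneg _) h 2
  linarith

lemma gauss_integrable : Integrable (fun w : E3 => Real.exp (-(‖w‖^(2:ℕ))/2)) := by
  have h := (GaussianFourier.integrable_cexp_neg_mul_sq_norm_add (V := E3)
    (b := (1/2 : ℂ)) (by norm_num) 0 0).norm
  apply h.congr'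
  · exact (Real.continuous_exp.comp ((continuous_norm.pow 2).neg.div_const 2)).aestronglyMeasurable
  · filter_upwards with w
    rw [Complex.norm_exp]
    congr 1
    simp
    norm_cast
    ring

lemma negpart_le (a x : ℝ) (hx : 0 ≤ x) (ha : 0 ≤ a) :
    max 0 (-(x * Real.log x)) ≤ a * x + 2 * Real.exp (-a/2) := by
  have hrhs : 0 ≤ a * x + 2 * Real.exp (-a/2) := by positivity
  rcases eq_or_lt_of_le hx with h0 | h0
  · rw [← h0]; simp; positivity
  rcases le_total (Real.exp (-a)) x with hcase | hcase
  · have hlog : -a ≤ Real.log x := by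
      calc -a = Real.log (Real.exp (-a)) := (Real.log_exp _).symm
      _ ≤ Real.log x := Real.log_le_log (Real.exp_pos _) hcase
    apply max_le hrhs
    have : -(x * Real.log x) ≤ a * x := by nlinarith
    have h2 : (0:ℝ) ≤ 2 * Real.exp (-a/2) := by positivity
    linarith
  · have hx1 : x ≤ 1 := hcase.trans (Real.exp_le_one_iff.mpr (by linarith))
    have hsx : 0 < Real.sqrt x := Real.sqrt_pos.mpr h0
    have hkey : -(x * Real.log x) ≤ 2 * Real.sqrt x := by
      have hls : Real.log x = 2 * Real.log (Real.sqrt x) := (Real.log_sqrt hx ▸ by ring)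
      have h1 : Real.log (Real.sqrt x)⁻¹ ≤ (Real.sqrt x)⁻¹ - 1 :=
        Real.log_le_sub_one_of_pos (by positivity)
      rw [Real.log_inv] at h1
      have h2 : -Real.log (Real.sqrt x) ≤ (Real.sqrt x)⁻¹ := by linarith [inv_nonneg.mpr hsx.le]
      have hxx : x = Real.sqrt x * Real.sqrt x := (Real.mul_self_sqrt hx).symm
      calc -(x * Real.log x) = 2 * (Real.sqrt x * Real.sqrt x) * (-Real.log (Real.sqrt x)) := by
            rw [hls]; linear_combination (-2*Real.log (Real.sqrt x)) * hxx
        _ ≤ 2 * (Real.sqrt x * Real.sqrt x) * (Real.sqrt x)⁻¹ := by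
            apply mul_le_mul_of_nonneg_left h2; positivity
        _ = 2 * Real.sqrt x := by field_simp
    have hss : Real.sqrt x ≤ Real.exp (-a/2) := by
      have : Real.sqrt x ≤ Real.sqrt (Real.exp (-a)) := Real.sqrt_le_sqrt hcase
      have he : Real.sqrt (Real.exp (-a)) = Real.exp (-a/2) := by
        rw [show Real.exp (-a) = (Real.exp (-a/2))^2 by
            rw [← Real.exp_nat_mul]; congr 1; push_cast; ring,
          Real.sqrt_sq (Real.exp_pos _).le]
      linarith [he ▸ this]
    apply max_le hrhs
    nlinarith [mul_nonneg ha hx]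

lemma tail_bound {f : E3 → ℝ} (hnn : ∀ v, 0 ≤ f v)
    (hfi : Integrable f volume) (h2i : Integrable (fun v => ‖v‖ ^ (2:ℕ) * f v) volume)
    {R : ℝ} (hR : 0 < R) :
    ∫ w in {w : E3 | R < ‖w‖}, f w ≤ (∫ v, ‖v‖ ^ (2:ℕ) * f v) / R ^ (2:ℕ) := by
  have hTm : MeasurableSet {w : E3 | R < ‖w‖} := measurableSet_lt measurable_const measurable_norm
  have step1 : ∫ w in {w : E3 | R < ‖w‖}, f w
      ≤ ∫ w in {w : E3 | R < ‖w‖}, ‖w‖ ^ (2:ℕ) * f w / R ^ (2:ℕ) := by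
    apply setIntegral_mono_on hfi.integrableOn ((h2i.div_const _).integrableOn) hTm
    intro w hw
    have hw' : R < ‖w‖ := hw
    rw [le_div_iff₀ (by positivity)]
    have : R ^ (2:ℕ) ≤ ‖w‖ ^ (2:ℕ) := by nlinarith [norm_nonneg w]
    nlinarith [hnn w]
  have step2 : ∫ w in {w : E3 | R < ‖w‖}, ‖w‖ ^ (2:ℕ) * f w / R ^ (2:ℕ)
      ≤ ∫ v, ‖v‖ ^ (2:ℕ) * f v / R ^ (2:ℕ) := by
    apply setIntegral_le_integral (h2i.div_const _)
    filter_upwards with w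
    have := hnn w
    positivity
  have step3 : ∫ v, ‖v‖ ^ (2:ℕ) * f v / R ^ (2:ℕ) = (∫ v, ‖v‖ ^ (2:ℕ) * f v) / R ^ (2:ℕ) :=
    integral_div _ _
  linarith

lemma concentration {f : E3 → ℝ} (hm : Measurable f) (hnn : ∀ v, 0 ≤ f v)
    (hfi : Integrable f volume) (hent : Integrable (fun v => f v * Real.log (f v)) volume)
    {N : ℝ} (hNi : Integrable (fun v => max 0 (-(f v * Real.log (f v)))) volume)
    (hN : (∫ v, max 0 (-(f v * Real.log (f v)))) ≤ N)
    {A : Set E3} (hA : MeasurableSet A) (hAfin : volume A ≠ ⊤)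
    {M : ℝ} (hM : 1 < M) :
    ∫ w in A, f w ≤ M * (volume A).toReal + ((∫ v, f v * Real.log (f v)) + N) / Real.log M := by
  have hlogM : 0 < Real.log M := Real.log_pos hM
  set t : Set E3 := {w | f w ≤ M} with ht
  have htm : MeasurableSet t := measurableSet_le hm measurable_const
  have hsplit := integral_inter_add_diff (s := A) (μ := volume) htm hfi.integrableOn
  have hAtfin : volume (A ∩ t) < ⊤ := lt_of_le_of_lt (measure_mono Set.inter_subset_left) hAfin.lt_top
  have part1 : ∫ w in A ∩ t, f w ≤ M * (volume A).toReal := by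
    have h1 : ∫ w in A ∩ t, f w ≤ ∫ _ in A ∩ t, M := by
      apply setIntegral_mono_on hfi.integrableOn (integrableOn_const hAtfin.ne) (hA.inter htm)
      intro w hw; exact hw.2
    have h2 : ∫ _ in A ∩ t, M = (volume (A ∩ t)).toReal * M := by
      rw [setIntegral_const]; rfl
    have h3 : (volume (A ∩ t)).toReal ≤ (volume A).toReal :=
      ENNReal.toReal_mono hAfin (measure_mono Set.inter_subset_left)
    calc ∫ w in A ∩ t, f w ≤ (volume (A ∩ t)).toReal * M := by linarith
    _ ≤ (volume A).toReal * M := mul_le_mul_of_nonneg_right h3 (by linarith)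
    _ = M * (volume A).toReal := mul_comm _ _
  have part2 : ∫ w in A \ t, f w ≤ ((∫ v, f v * Real.log (f v)) + N) / Real.log M := by
    have hsub : A \ t ⊆ tᶜ := fun w hw => hw.2
    have hgm : MeasurableSet tᶜ := htm.compl
    have h1 : ∫ w in A \ t, f w ≤ ∫ w in A \ t, f w * Real.log (f w) / Real.log M := by
      apply setIntegral_mono_on hfi.integrableOn (hent.div_const _).integrableOn (hA.diff htm)
      intro w hw
      have hfw : M < f w := lt_of_not_ge hw.2
      rw [le_div_iff₀ hlogM]
      have hlog : Real.log M ≤ Real.log (f w) := Real.log_le_log (by linarith) hfw.le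
      nlinarith [hnn w]
    have h2 : ∫ w in A \ t, f w * Real.log (f w) / Real.log M
        = (∫ w in A \ t, f w * Real.log (f w)) / Real.log M := integral_div _ _
    have hnn' : ∀ w ∈ tᶜ, 0 ≤ f w * Real.log (f w) := by
      intro w hw
      have hfw : M < f w := lt_of_not_ge hw
      have : 0 ≤ Real.log (f w) := Real.log_nonneg (by linarith)
      exact mul_nonneg (hnn w) this
    have h3 : ∫ w in A \ t, f w * Real.log (f w) ≤ ∫ w in tᶜ, f w * Real.log (f w) := by
      apply setIntegral_mono_set hent.integrableOn
      · filter_upwards [ae_restrict_mem hgm] with w hw using hnn' w hw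
      · exact HasSubset.Subset.eventuallyLE hsub
    have h4 : ∫ w in tᶜ, f w * Real.log (f w)
        = (∫ v, f v * Real.log (f v)) - ∫ w in t, f w * Real.log (f w) := by
      have := integral_add_compl htm hent
      linarith
    have h5 : -N ≤ ∫ w in t, f w * Real.log (f w) := by
      have hle : ∀ w, -(max 0 (-(f w * Real.log (f w)))) ≤ f w * Real.log (f w) := by
        intro w
        rcases le_total 0 (f w * Real.log (f w)) with h | h
        · have : max 0 (-(f w * Real.log (f w))) = 0 := max_eq_left (by linarith)
          rw [this]; linarith
        · have : max 0 (-(f w * Real.log (f w))) = -(f w * Real.log (f w)) := max_eq_right (by linarith)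
          rw [this]; linarith
      have hstep : ∫ w in t, -(max 0 (-(f w * Real.log (f w)))) ≤ ∫ w in t, f w * Real.log (f w) := by
        apply setIntegral_mono_on hNi.neg.integrableOn hent.integrableOn htm
        intro w _; exact hle w
      have hstep2 : ∫ w in t, max 0 (-(f w * Real.log (f w))) ≤ ∫ v, max 0 (-(f v * Real.log (f v))) := by
        apply setIntegral_le_integral hNi
        filter_upwards with w using le_max_left _ _
      have hneg : ∫ w in t, -(max 0 (-(f w * Real.log (f w))))
          = -∫ w in t, max 0 (-(f w * Real.log (f w))) := integral_neg _
      rw [hneg] at hstep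
      linarith
    calc ∫ w in A \ t, f w ≤ (∫ w in A \ t, f w * Real.log (f w)) / Real.log M := by
          rw [← h2]; exact h1
      _ ≤ ((∫ v, f v * Real.log (f v)) + N) / Real.log M := by
          exact (div_le_div_iff_of_pos_right hlogM).mpr (by linarith)
  linarith

lemma volume_box (a b : Fin 3 → ℝ) :
    volume (((MeasurableEquiv.toLp 2 (Fin 3 → ℝ)).symm) ⁻¹' (Set.univ.pi fun i => Set.Icc (a i) (b i)))
      = ∏ i, ENNReal.ofReal (b i - a i) := by
  rw [(EuclideanSpace.volume_preserving_symm_measurableEquiv_toLp (Fin 3)).measure_preimage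
    (MeasurableSet.univ_pi fun i => measurableSet_Icc).nullMeasurableSet]
  rw [volume_pi_pi]
  simp [Real.volume_Icc]

lemma exists_basis (u : E3) (hu : ‖u‖ = 1) :
    ∃ b : OrthonormalBasis (Fin 3) ℝ E3, b 0 = u := by
  have hcard : Module.finrank ℝ E3 = Fintype.card (Fin 3) := by simp
  have horth : Orthonormal ℝ (({0} : Set (Fin 3)).restrict (fun _ => u)) := by
    rw [orthonormal_iff_ite]
    intro i j
    have hij : i = j := Subtype.ext (by
      have hi := i.2; have hj := j.2
      simp only [Set.mem_singleton_iff] at hi hj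
      rw [hi, hj])
    subst hij
    have h2 : ⟪u, u⟫ = (1:ℝ) := by rw [real_inner_self_eq_norm_sq, hu]; norm_num
    show ⟪u, u⟫ = (if i = i then (1:ℝ) else 0)
    rw [if_pos rfl]; exact h2
  obtain ⟨b, hb⟩ := horth.exists_orthonormalBasis_extension_of_card_eq hcard
  exact ⟨b, hb 0 rfl⟩

lemma badset_measure (u v : E3) (hu : ‖u‖ = 1) {R r : ℝ} (hR : 0 < R) (hr : 0 < r) :
    volume {w : E3 | ‖w‖ ≤ R ∧ ‖v - w‖^(2:ℕ) - (∑ i, (v-w) i * u i)^2 < r^2}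
      ≤ ENNReal.ofReal (8 * R * r^2) := by
  obtain ⟨b, hb0⟩ := exists_basis u hu
  set c : E3 := b.repr v with hc
  set lo : Fin 3 → ℝ := ![-R, c 1 - r, c 2 - r] with hlo
  set hi : Fin 3 → ℝ := ![R, c 1 + r, c 2 + r] with hhi
  have hperp : ∀ z : E3, ‖z‖^(2:ℕ) - (∑ i, z i * u i)^2
      = (b.repr z 1)^2 + (b.repr z 2)^2 := by
    intro z
    have h1 : ‖z‖^(2:ℕ) = ∑ i, (b.repr z i)^2 := by
      rw [← norm_sq_eq (b.repr z), b.repr.norm_map]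
    have h2 : ∑ i, z i * u i = b.repr z 0 := by
      rw [← innerSum3, ← hb0, b.repr_apply_apply, real_inner_comm]
    rw [h1, h2, Fin.sum_univ_three]
    ring
  have hsub : {w : E3 | ‖w‖ ≤ R ∧ ‖v - w‖^(2:ℕ) - (∑ i, (v-w) i * u i)^2 < r^2}
      ⊆ b.repr ⁻¹' (((MeasurableEquiv.toLp 2 (Fin 3 → ℝ)).symm) ⁻¹'
        (Set.univ.pi fun i => Set.Icc (lo i) (hi i))) := by
    intro w hw
    obtain ⟨hw1, hw2⟩ := hw
    rw [hperp] at hw2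
    have key : ∀ i : Fin 3, (b.repr w) i ∈ Set.Icc (lo i) (hi i) := by
      intro i
      have hrepr : b.repr (v - w) = b.repr v - b.repr w := map_sub _ _ _
      have h1sq : (c 1 - b.repr w 1)^2 < r^2 := by
        have := hw2; rw [hrepr] at this
        simp only [PiLp.sub_apply] at this
        nlinarith [sq_nonneg (c 2 - b.repr w 2), sq_nonneg (c 1 - b.repr w 1)]
      have h2sq : (c 2 - b.repr w 2)^2 < r^2 := by
        have := hw2; rw [hrepr] at this
        simp only [PiLp.sub_apply] at this
        nlinarith [sq_nonneg (c 1 - b.repr w 1)]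
      have habs : ∀ s : ℝ, s^2 < r^2 → |s| < r := by
        intro s hs
        have : |s| = Real.sqrt (s^2) := (Real.sqrt_sq_eq_abs _).symm
        rw [this]
        calc Real.sqrt (s^2) < Real.sqrt (r^2) := by
              apply Real.sqrt_lt_sqrt (sq_nonneg _) hs
          _ = r := Real.sqrt_sq hr.le
      fin_cases i
      · have h0 : |b.repr w 0| ≤ R := by
          calc |b.repr w 0| ≤ ‖b.repr w‖ := abs_coord_le _ _
          _ = ‖w‖ := b.repr.norm_map w
          _ ≤ R := hw1
        have h0' := abs_le.mp h0
        exact ⟨by show -R ≤ b.repr w 0; linarith [h0'.1], by show b.repr w 0 ≤ R; exact h0'.2⟩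
      · have h := abs_lt.mp (habs _ h1sq)
        exact ⟨by show c 1 - r ≤ b.repr w 1; linarith [h.1, h.2],
               by show b.repr w 1 ≤ c 1 + r; linarith [h.1, h.2]⟩
      · have h := abs_lt.mp (habs _ h2sq)
        exact ⟨by show c 2 - r ≤ b.repr w 2; linarith [h.1, h.2],
               by show b.repr w 2 ≤ c 2 + r; linarith [h.1, h.2]⟩
    intro i _
    exact key i
  calc volume {w : E3 | ‖w‖ ≤ R ∧ ‖v - w‖^(2:ℕ) - (∑ i, (v-w) i * u i)^2 < r^2}
      ≤ volume (b.repr ⁻¹' (((MeasurableEquiv.toLp 2 (Fin 3 → ℝ)).symm) ⁻¹'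
        (Set.univ.pi fun i => Set.Icc (lo i) (hi i)))) := measure_mono hsub
    _ = volume (((MeasurableEquiv.toLp 2 (Fin 3 → ℝ)).symm) ⁻¹'
        (Set.univ.pi fun i => Set.Icc (lo i) (hi i))) := by
        apply b.measurePreserving_repr.measure_preimage
        exact (((MeasurableEquiv.toLp 2 (Fin 3 → ℝ)).symm).measurable
          (MeasurableSet.univ_pi fun i => measurableSet_Icc)).nullMeasurableSet
    _ = ∏ i, ENNReal.ofReal (hi i - lo i) := volume_box lo hi
    _ ≤ ENNReal.ofReal (8 * R * r^2) := by
        rw [Fin.prod_univ_three]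
        simp only [hlo, hhi]
        rw [show (![R, c 1 + r, c 2 + r] : Fin 3 → ℝ) 0 - ![-R, c 1 - r, c 2 - r] 0 = 2*R by simp; ring]
        rw [show (![R, c 1 + r, c 2 + r] : Fin 3 → ℝ) 1 - ![-R, c 1 - r, c 2 - r] 1 = 2*r by simp; ring]
        rw [show (![R, c 1 + r, c 2 + r] : Fin 3 → ℝ) 2 - ![-R, c 1 - r, c 2 - r] 2 = 2*r by simp; ring]
        rw [← ENNReal.ofReal_mul (by positivity), ← ENNReal.ofReal_mul (by positivity)]
        apply ENNReal.ofReal_le_ofReal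
        nlinarith

lemma mass_split {f : E3 → ℝ} (hfi : Integrable f volume) (hnn : ∀ v, 0 ≤ f v)
    (hf1 : (∫ v, f v) = 1) {S T A : Set E3} (hSm : MeasurableSet S)
    (hAm : MeasurableSet A) (hST : Sᶜ ⊆ T ∪ A) (hd : Disjoint T A)
    (hT : ∫ w in T, f w ≤ 1/4) (hA : ∫ w in A, f w ≤ 1/4) :
    1/2 ≤ ∫ w in S, f w := by
  have h1 := integral_add_compl hSm hfi
  have h2 : ∫ w in Sᶜ, f w ≤ ∫ w in T ∪ A, f w := by
    apply setIntegral_mono_set hfi.integrableOn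
    · filter_upwards with w using hnn w
    · exact HasSubset.Subset.eventuallyLE hST
  have h3 := setIntegral_union (f := f) (μ := volume) hd hAm hfi.integrableOn hfi.integrableOn
  linarith

set_option maxHeartbeats 1000000 in
theorem landau_ellipticity
    (γ : ℝ) (hγ : γ ∈ Set.Ico (-2 : ℝ) 0) (E₀ H₀ : ℝ) (hE₀ : 0 < E₀) (hH₀ : 0 < H₀) :
    ∃ c : ℝ, 0 < c ∧
      ∀ f : E3 → ℝ, Measurable f → (∀ v, 0 ≤ f v) →
        Integrable f volume → (∫ v, f v) = 1 →
        Integrable (fun v => ‖v‖ ^ (2:ℕ) * f v) volume →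
        (∫ v, ‖v‖ ^ (2:ℕ) * f v) ≤ E₀ →
        Integrable (fun v => f v * Real.log (f v)) volume →
        (∫ v, f v * Real.log (f v)) ≤ H₀ →
        ∀ v ξ : E3,
          c * (1 + ‖v‖) ^ γ * ‖ξ‖ ^ (2:ℕ) ≤
            ∑ i, ∑ j, (∫ w, aCoef γ (v - w) i j * f w) * ξ i * ξ j := by
  obtain ⟨hγ1, hγ2⟩ := hγ
  set Cg : ℝ := ∫ w : E3, 2 * Real.exp (-(‖w‖^(2:ℕ))/2) with hCg
  have hCgi : Integrable (fun w : E3 => 2 * Real.exp (-(‖w‖^(2:ℕ))/2)) volume :=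
    gauss_integrable.const_mul 2
  set R : ℝ := max 1 (2 * Real.sqrt E₀) with hRdef
  have hR1 : 1 ≤ R := le_max_left _ _
  have hRpos : 0 < R := lt_of_lt_of_le one_pos hR1
  have hRE : 4 * E₀ ≤ R^(2:ℕ) := by
    have h1 : 2 * Real.sqrt E₀ ≤ R := le_max_right _ _
    have h2 : Real.sqrt E₀ ^ (2:ℕ) = E₀ := Real.sq_sqrt hE₀.le
    nlinarith [Real.sqrt_nonneg E₀]
  set K : ℝ := max (H₀ + E₀ + Cg) 1 with hKdef
  have hK1 : 1 ≤ K := le_max_right _ _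
  have hKpos : 0 < K := lt_of_lt_of_le one_pos hK1
  set M : ℝ := Real.exp (8 * K) with hMdef
  have hM1 : 1 < M := Real.one_lt_exp_iff.mpr (by positivity)
  have hMpos : 0 < M := lt_trans one_pos hM1
  set r2 : ℝ := 1 / (64 * R * M) with hr2def
  have hr2pos : 0 < r2 := by positivity
  have hRγ : 0 < R ^ γ := Real.rpow_pos_of_pos hRpos γ
  refine ⟨R ^ γ * r2 / 2, by positivity, ?_⟩
  intro f hm hnn hfi hf1 h2i hE hent hH v ξ
  -- negative part of the entropy integrand
  have hnp_meas : Measurable fun w : E3 => max 0 (-(f w * Real.log (f w))) :=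
    measurable_const.max ((hm.mul (Real.measurable_log.comp hm)).neg)
  have hdomi : Integrable (fun w : E3 => ‖w‖^(2:ℕ) * f w + 2 * Real.exp (-(‖w‖^(2:ℕ))/2)) volume :=
    h2i.add hCgi
  have hnpi : Integrable (fun w : E3 => max 0 (-(f w * Real.log (f w)))) volume := by
    apply hdomi.mono' hnp_meas.aestronglyMeasurable
    filter_upwards with w
    rw [Real.norm_eq_abs, abs_of_nonneg (le_max_left _ _)]
    exact negpart_le _ _ (hnn w) (by positivity)
  have hNbd : (∫ w, max 0 (-(f w * Real.log (f w)))) ≤ E₀ + Cg := by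
    have h1 : (∫ w, max 0 (-(f w * Real.log (f w))))
        ≤ ∫ w, (‖w‖^(2:ℕ) * f w + 2 * Real.exp (-(‖w‖^(2:ℕ))/2)) :=
      integral_mono hnpi hdomi (fun w => negpart_le _ _ (hnn w) (by positivity))
    rw [integral_add h2i hCgi] at h1
    rw [← hCg] at h1
    linarith
  rcases eq_or_ne ξ 0 with rfl | hξ
  · simp
  set u : E3 := ‖ξ‖⁻¹ • ξ with hudef
  have hξn : (0:ℝ) < ‖ξ‖ := norm_pos_iff.mpr hξ
  have hu : ‖u‖ = 1 := by
    rw [hudef, norm_smul, norm_inv, norm_norm, inv_mul_cancel₀ (ne_of_gt hξn)]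
  have husq : ∑ i, (u i)^2 = 1 := by
    rw [← norm_sq_eq, hu]; norm_num
  have hξu : ∀ i, ξ i = ‖ξ‖ * u i := by
    intro i
    have h : u i = ‖ξ‖⁻¹ * ξ i := rfl
    rw [h]
    field_simp
  -- integrability of the matrix entries against f
  have haint : ∀ i j : Fin 3, Integrable (fun w : E3 => aCoef γ (v - w) i j * f w) volume := by
    intro i j
    have hmeas : Measurable fun w : E3 => aCoef γ (v - w) i j * f w := by
      apply Measurable.mul _ hm
      unfold aCoef
      fun_prop
    apply ((hfi.const_mul (2 + 4*‖v‖^(2:ℕ))).add (h2i.const_mul 4)).mono'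
      hmeas.aestronglyMeasurable
    filter_upwards with w
    rw [norm_mul, Real.norm_eq_abs, Real.norm_eq_abs (f w), abs_of_nonneg (hnn w)]
    have h1 := abs_aCoef_le hγ1 hγ2 (v - w) i j
    have h2 : ‖v - w‖^(2:ℕ) ≤ 2*‖v‖^(2:ℕ) + 2*‖w‖^(2:ℕ) := by
      have h3 := norm_sub_le v w
      have h4 := mul_self_le_mul_self (norm_nonneg (v - w)) h3
      nlinarith [h4, sq_nonneg (‖v‖ - ‖w‖)]
    have h4 : |aCoef γ (v - w) i j| ≤ 2 + 4*‖v‖^(2:ℕ) + 4*‖w‖^(2:ℕ) := by nlinarith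
    calc |aCoef γ (v - w) i j| * f w ≤ (2 + 4*‖v‖^(2:ℕ) + 4*‖w‖^(2:ℕ)) * f w :=
        mul_le_mul_of_nonneg_right h4 (hnn w)
      _ ≤ (2 + 4*‖v‖^(2:ℕ)) * f w + 4 * (‖w‖^(2:ℕ) * f w) := by nlinarith [hnn w]
  -- the quadratic form integrand
  set Q : E3 → ℝ := fun z => ‖z‖ ^ γ * (‖z‖^(2:ℕ) - (∑ i, z i * u i)^2) with hQdef
  have hQnn : ∀ z, 0 ≤ Q z := fun z =>
    mul_nonneg (Real.rpow_nonneg (norm_nonneg _) _) (Q_nonneg z u hu)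
  have hQle : ∀ z, Q z ≤ 1 + ‖z‖^(2:ℕ) := by
    intro z
    have h1 : ‖z‖^(2:ℕ) - (∑ i, z i * u i)^2 ≤ ‖z‖^(2:ℕ) := by
      nlinarith [sq_nonneg (∑ i, z i * u i)]
    have h2 : 0 ≤ ‖z‖ ^ γ := Real.rpow_nonneg (norm_nonneg _) _
    calc Q z ≤ ‖z‖ ^ γ * ‖z‖^(2:ℕ) := mul_le_mul_of_nonneg_left h1 h2
      _ ≤ 1 + ‖z‖^(2:ℕ) := rpow_mul_sq_le hγ1 hγ2 (norm_nonneg z)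
  have hQmeas : Measurable fun w : E3 => Q (v - w) * f w := by
    apply Measurable.mul _ hm
    simp only [hQdef]
    fun_prop
  have hQint : Integrable (fun w : E3 => Q (v - w) * f w) volume := by
    apply ((hfi.const_mul (3 + 2*‖v‖^(2:ℕ))).add (h2i.const_mul 2)).mono'
      hQmeas.aestronglyMeasurable
    filter_upwards with w
    rw [norm_mul, Real.norm_eq_abs, Real.norm_eq_abs (f w), abs_of_nonneg (hnn w),
      abs_of_nonneg (hQnn _)]
    have h1 := hQle (v - w)
    have h2 : ‖v - w‖^(2:ℕ) ≤ 2*‖v‖^(2:ℕ) + 2*‖w‖^(2:ℕ) := by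
      have h3 := norm_sub_le v w
      have h4 := mul_self_le_mul_self (norm_nonneg (v - w)) h3
      nlinarith [h4, sq_nonneg (‖v‖ - ‖w‖)]
    have h4 : Q (v - w) ≤ 1 + 2*‖v‖^(2:ℕ) + 2*‖w‖^(2:ℕ) := by linarith
    calc Q (v - w) * f w ≤ (1 + 2*‖v‖^(2:ℕ) + 2*‖w‖^(2:ℕ)) * f w :=
        mul_le_mul_of_nonneg_right h4 (hnn w)
      _ ≤ (3 + 2*‖v‖^(2:ℕ)) * f w + 2 * (‖w‖^(2:ℕ) * f w) := by nlinarith [hnn w]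
  -- rewrite the quadratic form as an integral
  have hsum : ∑ i, ∑ j, (∫ w, aCoef γ (v - w) i j * f w) * ξ i * ξ j
      = ‖ξ‖^(2:ℕ) * ∫ w, Q (v - w) * f w := by
    have e1 : ∀ i j : Fin 3, (∫ w, aCoef γ (v - w) i j * f w) * ξ i * ξ j
        = ‖ξ‖^(2:ℕ) * ∫ w, aCoef γ (v - w) i j * f w * u i * u j := by
      intro i j
      have h : (∫ w, aCoef γ (v - w) i j * f w) * ξ i * ξ j
          = ‖ξ‖^(2:ℕ) * ((∫ w, aCoef γ (v - w) i j * f w) * u i * u j) := by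
        rw [hξu i, hξu j]; ring
      rw [h, ← integral_mul_const, ← integral_mul_const]
    simp_rw [e1, ← Finset.mul_sum]
    congr 1
    have e2 : ∀ i : Fin 3, ∑ j, ∫ w, aCoef γ (v - w) i j * f w * u i * u j
        = ∫ w, ∑ j, aCoef γ (v - w) i j * f w * u i * u j := fun i =>
      (integral_finset_sum _ (fun j _ => ((haint i j).mul_const _).mul_const _)).symm
    simp_rw [e2]
    rw [← integral_finset_sum _ (fun i _ => integrable_finset_sum _
      (fun j _ => ((haint i j).mul_const _).mul_const _))]
    refine integral_congr_ae (Filter.Eventually.of_forall fun w => ?_)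
    show (∑ i, ∑ j, aCoef γ (v - w) i j * f w * u i * u j) = Q (v - w) * f w
    have e3 : ∑ i, ∑ j, aCoef γ (v - w) i j * f w * u i * u j
        = (∑ i, ∑ j, aCoef γ (v - w) i j * u i * u j) * f w := by
      rw [Finset.sum_mul]
      refine Finset.sum_congr rfl fun i _ => ?_
      rw [Finset.sum_mul]
      refine Finset.sum_congr rfl fun j _ => ?_
      ring
    rw [e3, sum_aCoef, husq]
    simp only [hQdef]
    ring
  -- geometric sets
  set r : ℝ := Real.sqrt r2 with hrdef
  have hrpos : 0 < r := Real.sqrt_pos.mpr hr2pos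
  have hrsq : r^(2:ℕ) = r2 := Real.sq_sqrt hr2pos.le
  have hPm : Measurable fun w : E3 => ‖v - w‖^(2:ℕ) - (∑ i, (v-w) i * u i)^2 := by fun_prop
  set A : Set E3 := {w : E3 | ‖w‖ ≤ R ∧ ‖v - w‖^(2:ℕ) - (∑ i, (v-w) i * u i)^2 < r^2} with hAdef
  set S : Set E3 := {w : E3 | ‖w‖ ≤ R ∧ r^2 ≤ ‖v - w‖^(2:ℕ) - (∑ i, (v-w) i * u i)^2} with hSdef
  set T : Set E3 := {w : E3 | R < ‖w‖} with hTdef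
  have hAm : MeasurableSet A := by
    rw [hAdef]
    exact (measurableSet_le measurable_norm measurable_const).inter
      (measurableSet_lt hPm measurable_const)
  have hSm : MeasurableSet S := by
    rw [hSdef]
    exact (measurableSet_le measurable_norm measurable_const).inter
      (measurableSet_le measurable_const hPm)
  have hTm : MeasurableSet T := by
    rw [hTdef]
    exact measurableSet_lt measurable_const measurable_norm
  -- measure of the bad set A and concentration
  have hAvol : volume A ≤ ENNReal.ofReal (8 * R * r^2) := by
    rw [hAdef]
    exact badset_measure u v hu hRpos hrpos
  have hAfin : volume A ≠ ⊤ := ne_top_of_le_ne_top ENNReal.ofReal_ne_top hAvol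
  have hAint : ∫ w in A, f w ≤ 1/4 := by
    have hcon := concentration hm hnn hfi hent hnpi hNbd hAm hAfin hM1
    have hvol : (volume A).toReal ≤ 8 * R * r^2 := by
      calc (volume A).toReal ≤ (ENNReal.ofReal (8 * R * r^2)).toReal :=
        ENNReal.toReal_mono ENNReal.ofReal_ne_top hAvol
      _ = 8 * R * r^2 := ENNReal.toReal_ofReal (by positivity)
    have hval : M * (8 * R * r^2) = 1/8 := by
      rw [hrsq, hr2def]
      field_simp
      ring
    have h1 : M * (volume A).toReal ≤ 1/8 := by
      calc M * (volume A).toReal ≤ M * (8 * R * r^2) :=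
        mul_le_mul_of_nonneg_left hvol hMpos.le
      _ = 1/8 := hval
    have h2 : ((∫ v, f v * Real.log (f v)) + (E₀ + Cg)) / Real.log M ≤ 1/8 := by
      rw [hMdef, Real.log_exp]
      rw [div_le_iff₀ (by positivity)]
      have hKge : H₀ + E₀ + Cg ≤ K := le_max_left _ _
      linarith
    linarith
  -- tail estimate
  have hTint : ∫ w in T, f w ≤ 1/4 := by
    have h1 := tail_bound hnn hfi h2i hRpos
    rw [← hTdef] at h1
    have h2 : (∫ v, ‖v‖^(2:ℕ) * f v) / R^(2:ℕ) ≤ E₀ / R^(2:ℕ) :=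
      (div_le_div_iff_of_pos_right (by positivity)).mpr hE
    have h3 : E₀ / R^(2:ℕ) ≤ 1/4 := by
      rw [div_le_iff₀ (by positivity)]
      linarith
    linarith
  -- the good set has mass at least 1/2
  have hsubsets : Sᶜ ⊆ T ∪ A := by
    intro w hw
    rw [Set.mem_compl_iff, hSdef, Set.mem_setOf_eq] at hw
    push_neg at hw
    rw [Set.mem_union, hTdef, hAdef, Set.mem_setOf_eq, Set.mem_setOf_eq]
    rcases le_or_gt ‖w‖ R with h1 | h1
    · exact Or.inr ⟨h1, hw h1⟩
    · exact Or.inl h1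
  have hdisj : Disjoint T A := by
    rw [Set.disjoint_left]
    intro w hw hw2
    rw [hTdef, Set.mem_setOf_eq] at hw
    rw [hAdef, Set.mem_setOf_eq] at hw2
    linarith [hw2.1]
  have hmass : 1/2 ≤ ∫ w in S, f w := mass_split hfi hnn hf1 hSm hAm hsubsets hdisj hTint hAint
  -- pointwise lower bound on S
  set cst : ℝ := (‖v‖ + R)^γ * r2 with hcstdef
  have hcstpos : 0 < cst := by
    rw [hcstdef]
    exact mul_pos (Real.rpow_pos_of_pos (by positivity) _) hr2pos
  have hlow : ∫ w in S, cst * f w ≤ ∫ w in S, Q (v - w) * f w := by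
    apply setIntegral_mono_on (hfi.const_mul cst).integrableOn hQint.integrableOn hSm
    intro w hw
    rw [hSdef, Set.mem_setOf_eq] at hw
    obtain ⟨hw1, hw2⟩ := hw
    have hz2 : r^2 ≤ ‖v - w‖^(2:ℕ) :=
      le_trans hw2 (by nlinarith [sq_nonneg (∑ i, (v-w) i * u i)])
    have hzpos : 0 < ‖v - w‖ := by nlinarith [norm_nonneg (v - w), hrpos]
    have hzle : ‖v - w‖ ≤ ‖v‖ + R := le_trans (norm_sub_le v w) (by linarith)
    have h1 : (‖v‖ + R)^γ ≤ ‖v - w‖^γ := Real.rpow_le_rpow_of_nonpos hzpos hzle hγ2.le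
    have h2 : r2 ≤ ‖v - w‖^(2:ℕ) - (∑ i, (v-w) i * u i)^2 := by rw [← hrsq]; exact hw2
    have h3 : cst ≤ Q (v - w) := by
      rw [hcstdef]
      simp only [hQdef]
      exact mul_le_mul h1 h2 hr2pos.le (Real.rpow_nonneg (norm_nonneg _) _)
    exact mul_le_mul_of_nonneg_right h3 (hnn w)
  have hconst : ∫ w in S, cst * f w = cst * ∫ w in S, f w := integral_const_mul _ _
  have hS_to_full : ∫ w in S, Q (v - w) * f w ≤ ∫ w, Q (v - w) * f w :=
    setIntegral_le_integral hQint (Filter.Eventually.of_forall fun w =>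
      mul_nonneg (hQnn _) (hnn w))
  have hfinal1 : cst * (1/2) ≤ ∫ w, Q (v - w) * f w := by
    have h := mul_le_mul_of_nonneg_left hmass hcstpos.le
    rw [hconst] at hlow
    linarith
  have hcst_low : R^γ * (1+‖v‖)^γ * r2 ≤ cst := by
    rw [hcstdef]
    have h1 : ‖v‖ + R ≤ R * (1 + ‖v‖) := by nlinarith [norm_nonneg v]
    have h2 : (R * (1 + ‖v‖))^γ ≤ (‖v‖ + R)^γ :=
      Real.rpow_le_rpow_of_nonpos (by positivity) h1 hγ2.le
    have h3 : (R * (1 + ‖v‖))^γ = R^γ * (1 + ‖v‖)^γ :=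
      Real.mul_rpow hRpos.le (by positivity)
    exact mul_le_mul_of_nonneg_right (h3 ▸ h2) hr2pos.le
  have hgoal : R ^ γ * r2 / 2 * (1 + ‖v‖)^γ ≤ ∫ w, Q (v - w) * f w := by
    nlinarith [hcst_low, hfinal1, Real.rpow_pos_of_pos (show (0:ℝ) < 1 + ‖v‖ by positivity) γ]
  rw [hsum]
  calc R ^ γ * r2 / 2 * (1 + ‖v‖) ^ γ * ‖ξ‖ ^ (2:ℕ)
      = ‖ξ‖^(2:ℕ) * (R ^ γ * r2 / 2 * (1 + ‖v‖)^γ) := by ring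
    _ ≤ ‖ξ‖^(2:ℕ) * ∫ w, Q (v - w) * f w :=
        mul_le_mul_of_nonneg_left hgoal (by positivity)

end
end

section
/- Let γ∈(−3,0) and p>3/(3+γ). There exists a constant C_{γ,p}>0 such that for every nonnegative measurable f:ℝ³→ℝ with ∫_{ℝ³} f(v)dv=1 and f∈L^p(ℝ³): ∬_{ℝ³×ℝ³} |v−v_*|^{γ} f(v_*) f(v)^{p} dv dv_* ≤ C_{γ,p} ( 1 + ‖f‖_{L^p}^{2p} ). -/
open MeasureTheory Metric
open scoped ENNReal

noncomputable section

private lemma kernel_finite (s : ℝ) (hs : -3 < s) (hs0 : s < 0) :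
    ∫⁻ z : E3, ENNReal.ofReal (‖z‖ ^ s) ∂(volume.restrict (ball 0 1)) < ⊤ := by
  set V : ℝ≥0∞ := volume (ball (0 : E3) 1) with hV
  have hVlt : V < ⊤ := measure_ball_lt_top
  set A : ℕ → Set E3 := fun n => {z | ((1:ℝ)/2) ^ (n+1) ≤ ‖z‖ ∧ ‖z‖ < ((1:ℝ)/2) ^ n} with hA
  have hAmeas : ∀ n, MeasurableSet (A n) :=
    fun n => (measurableSet_le measurable_const measurable_norm).inter
      (measurableSet_lt measurable_norm measurable_const)
  have hhalf : ∀ n : ℕ, (0:ℝ) < ((1:ℝ)/2) ^ n := fun n => pow_pos (by norm_num) n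
  have hcover : ball (0 : E3) 1 ⊆ {0} ∪ ⋃ n, A n := by
    intro z hz
    rcases eq_or_ne z 0 with rfl | hz0
    · exact Or.inl rfl
    · right
      have hznorm : 0 < ‖z‖ := norm_pos_iff.2 hz0
      have hzlt : ‖z‖ < 1 := by simpa using mem_ball_iff_norm.1 hz
      have hex : ∃ n : ℕ, ((1:ℝ)/2) ^ (n+1) ≤ ‖z‖ := by
        obtain ⟨n, hn⟩ := exists_pow_lt_of_lt_one hznorm (by norm_num : (1:ℝ)/2 < 1)
        exact ⟨n, le_of_lt (lt_of_le_of_lt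
          (pow_le_pow_of_le_one (by norm_num) (by norm_num) (Nat.le_succ n)) hn)⟩
      refine Set.mem_iUnion.2 ⟨Nat.find hex, Nat.find_spec hex, ?_⟩
      rcases Nat.eq_zero_or_pos (Nat.find hex) with h0 | hpos
      · rw [h0]; simpa using hzlt
      · have := Nat.find_min hex (Nat.sub_lt hpos one_pos)
        have heq : Nat.find hex - 1 + 1 = Nat.find hex := Nat.succ_pred_eq_of_pos hpos
        rw [heq] at this
        exact lt_of_not_ge this
  -- bound the integral
  have hbound : ∀ n, (∫⁻ z : E3, ENNReal.ofReal (‖z‖ ^ s) ∂(volume.restrict (A n)))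
      ≤ ENNReal.ofReal ((((1:ℝ)/2) ^ (n+1)) ^ s) * (ENNReal.ofReal ((((1:ℝ)/2) ^ n) ^ (3:ℕ)) * V) := by
    intro n
    calc ∫⁻ z : E3, ENNReal.ofReal (‖z‖ ^ s) ∂(volume.restrict (A n))
        ≤ ∫⁻ _z : E3, ENNReal.ofReal ((((1:ℝ)/2) ^ (n+1)) ^ s) ∂(volume.restrict (A n)) := by
          apply lintegral_mono_ae
          filter_upwards [ae_restrict_mem (hAmeas n)] with z hz
          exact ENNReal.ofReal_le_ofReal
            (Real.rpow_le_rpow_of_nonpos (hhalf (n+1)) hz.1 hs0.le)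
      _ = ENNReal.ofReal ((((1:ℝ)/2) ^ (n+1)) ^ s) * volume (A n) := by
          rw [lintegral_const, Measure.restrict_apply MeasurableSet.univ, Set.univ_inter]
      _ ≤ ENNReal.ofReal ((((1:ℝ)/2) ^ (n+1)) ^ s) * (ENNReal.ofReal ((((1:ℝ)/2) ^ n) ^ (3:ℕ)) * V) := by
          gcongr
          have hsub : A n ⊆ ball (0 : E3) (((1:ℝ)/2) ^ n) := fun z hz => by
            simpa [mem_ball_iff_norm] using hz.2
          calc volume (A n) ≤ volume (ball (0 : E3) (((1:ℝ)/2) ^ n)) := measure_mono hsub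
            _ = ENNReal.ofReal ((((1:ℝ)/2) ^ n) ^ (3:ℕ)) * V := by
                rw [hV, Measure.addHaar_ball _ _ (hhalf n).le]
                norm_num [finrank_euclideanSpace]
  -- sum over annuli
  set r : ℝ≥0∞ := ENNReal.ofReal (((1:ℝ)/2) ^ (s+3)) with hr
  have hrlt : r < 1 := by
    rw [hr, ← ENNReal.ofReal_one]
    exact ENNReal.ofReal_lt_ofReal_iff_of_nonneg (Real.rpow_nonneg (by norm_num) _) |>.2
      (Real.rpow_lt_one (by norm_num) (by norm_num) (by linarith))
  have key : ∀ n : ℕ, ((((1:ℝ)/2) ^ (n+1)) ^ s) * ((((1:ℝ)/2) ^ n : ℝ) ^ (3:ℕ))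
      = ((1:ℝ)/2) ^ s * ((((1:ℝ)/2) ^ (s+3)) ^ n) := by
    intro n
    rw [← Real.rpow_natCast ((1:ℝ)/2) (n+1), ← Real.rpow_natCast ((1:ℝ)/2) n,
        ← Real.rpow_natCast (((1:ℝ)/2) ^ ((n:ℝ))) 3, ← Real.rpow_mul (by norm_num),
        ← Real.rpow_mul (by norm_num),
        ← Real.rpow_natCast (((1:ℝ)/2) ^ (s+3)) n,
        ← Real.rpow_mul (by norm_num),
        ← Real.rpow_add (by norm_num), ← Real.rpow_add (by norm_num)]
    congr 1
    push_cast
    ring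
  have hterm : ∀ n : ℕ,
      ENNReal.ofReal ((((1:ℝ)/2) ^ (n+1)) ^ s) * (ENNReal.ofReal ((((1:ℝ)/2) ^ n) ^ (3:ℕ)) * V)
      = (ENNReal.ofReal (((1:ℝ)/2) ^ s) * V) * r ^ n := by
    intro n
    rw [← mul_assoc, ← ENNReal.ofReal_mul (Real.rpow_nonneg (hhalf (n+1)).le s), key n,
        ENNReal.ofReal_mul (Real.rpow_nonneg (by norm_num) s),
        hr, ← ENNReal.ofReal_pow (Real.rpow_nonneg (by norm_num) _)]
    ring
  calc ∫⁻ z : E3, ENNReal.ofReal (‖z‖ ^ s) ∂(volume.restrict (ball 0 1))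
      ≤ ∫⁻ z : E3, ENNReal.ofReal (‖z‖ ^ s) ∂(volume.restrict ({0} ∪ ⋃ n, A n)) :=
        lintegral_mono_set hcover
    _ ≤ (∫⁻ z : E3, ENNReal.ofReal (‖z‖ ^ s) ∂(volume.restrict {0}))
        + ∫⁻ z : E3, ENNReal.ofReal (‖z‖ ^ s) ∂(volume.restrict (⋃ n, A n)) :=
        lintegral_union_le _ _ _
    _ = ∫⁻ z : E3, ENNReal.ofReal (‖z‖ ^ s) ∂(volume.restrict (⋃ n, A n)) := by
        rw [setLIntegral_measure_zero _ _ (measure_singleton _), zero_add]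
    _ ≤ ∑' n, ∫⁻ z : E3, ENNReal.ofReal (‖z‖ ^ s) ∂(volume.restrict (A n)) :=
        lintegral_iUnion_le _ _
    _ ≤ ∑' n, ENNReal.ofReal ((((1:ℝ)/2) ^ (n+1)) ^ s)
          * (ENNReal.ofReal ((((1:ℝ)/2) ^ n) ^ (3:ℕ)) * V) := ENNReal.tsum_le_tsum hbound
    _ = (ENNReal.ofReal (((1:ℝ)/2) ^ s) * V) * ∑' n, r ^ n := by
        simp_rw [hterm]; rw [ENNReal.tsum_mul_left]
    _ = (ENNReal.ofReal (((1:ℝ)/2) ^ s) * V) * (1 - r)⁻¹ := by rw [ENNReal.tsum_geometric]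
    _ < ⊤ := by
        apply ENNReal.mul_lt_top
        · exact ENNReal.mul_lt_top ENNReal.ofReal_lt_top hVlt
        · exact ENNReal.inv_lt_top.2 (tsub_pos_of_lt hrlt)

private lemma rpow_le_one_add {x : ℝ≥0∞} {a b : ℝ} (ha : 0 ≤ a) (hab : a ≤ b) :
    x ^ a ≤ 1 + x ^ b := by
  rcases le_total x 1 with hx | hx
  · exact le_trans (ENNReal.rpow_le_one hx ha) le_self_add
  · exact le_trans (ENNReal.rpow_le_rpow_of_exponent_le hx hab) le_add_self

theorem landau_Lp_production_bound
    (γ : ℝ) (hγ : γ ∈ Set.Ioo (-3 : ℝ) 0) (p : ℝ) (hp : 3 / (3 + γ) < p) :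
    ∃ C : ℝ, 0 < C ∧
      ∀ f : E3 → ℝ, Measurable f → (∀ v, 0 ≤ f v) →
        (∫⁻ v, ENNReal.ofReal (f v)) = 1 →
        MemLp f (ENNReal.ofReal p) volume →
        (∫⁻ v, ∫⁻ w, ENNReal.ofReal (‖v - w‖ ^ γ * f w * f v ^ p)) ≤
          ENNReal.ofReal C *
            (1 + eLpNorm f (ENNReal.ofReal p) volume ^ (2 * p)) := by
  obtain ⟨hγ1, hγ2⟩ := hγ
  have h3γ : 0 < 3 + γ := by linarith
  have hp1 : 1 < p := lt_of_le_of_lt (by rw [le_div_iff₀ h3γ]; linarith) hp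
  have hp0 : 0 < p := by linarith
  have hpq : p.HolderConjugate (p / (p - 1)) := Real.HolderConjugate.conjExponent hp1
  set q := p / (p - 1) with hq
  have hq0 : 0 < q := hpq.symm.pos
  have hkey : 3 < p * (3 + γ) := by rw [div_lt_iff₀ h3γ] at hp; linarith
  have hγq : -3 < γ * q := by
    have hp1' : 0 < p - 1 := by linarith
    rw [hq, ← mul_div_assoc, lt_div_iff₀ hp1']
    nlinarith
  have hγq0 : γ * q < 0 := mul_neg_of_neg_of_pos hγ2 hq0
  set I := ∫⁻ z : E3, ENNReal.ofReal (‖z‖ ^ (γ * q)) ∂(volume.restrict (ball 0 1)) with hI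
  have hIlt : I < ⊤ := kernel_finite _ hγq hγq0
  set A := I ^ (1 / q) with hAdef
  have hAlt : A < ⊤ := ENNReal.rpow_lt_top_of_nonneg (by positivity) hIlt.ne
  have hBlt : A + 1 < ⊤ := by
    exact ENNReal.add_lt_top.2 ⟨hAlt, ENNReal.one_lt_top⟩
  refine ⟨(A + 1).toReal + 1, by positivity, ?_⟩
  intro f hf hf0 hmass hmem
  -- notation
  set F : E3 → ℝ≥0∞ := fun v => ENNReal.ofReal (f v) with hF
  have hFmeas : Measurable F := ENNReal.measurable_ofReal.comp hf
  have hFpmeas : Measurable fun v => F v ^ p := hFmeas.pow measurable_const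
  set S := ∫⁻ v, F v ^ p with hS
  set N := eLpNorm f (ENNReal.ofReal p) volume with hN
  have hpne0 : (ENNReal.ofReal p) ≠ 0 := (ENNReal.ofReal_pos.2 hp0).ne'
  have hNS : N = S ^ (1 / p) := by
    rw [hN, eLpNorm_eq_lintegral_rpow_enorm_toReal hpne0 ENNReal.ofReal_ne_top,
        ENNReal.toReal_ofReal hp0.le]
    congr 1
    apply lintegral_congr
    intro v
    rw [Real.enorm_eq_ofReal (hf0 v)]
  have hSN : S = N ^ p := by
    rw [hNS, ← ENNReal.rpow_mul, one_div_mul_cancel hp0.ne', ENNReal.rpow_one]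
  have hNtop : N ≠ ⊤ := hmem.2.ne
  have hN0 : N ≠ 0 := by
    intro h
    have hz : f =ᵐ[volume] 0 := (eLpNorm_eq_zero_iff hmem.1 hpne0).1 h
    have hz' : F =ᵐ[volume] (fun _ => (0:ℝ≥0∞)) := hz.mono fun v hv => by
      simp only [hF]
      rw [Pi.zero_apply] at hv
      simp [hv]
    have : (∫⁻ v, F v) = 0 := by rw [lintegral_congr_ae hz', lintegral_zero]
    rw [hmass] at this
    exact one_ne_zero this
  have hSlt : S < ⊤ := by
    rw [hSN]; exact ENNReal.rpow_lt_top_of_nonneg hp0.le hNtop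
  -- kernel
  set K : E3 → ℝ≥0∞ := fun z => ENNReal.ofReal (‖z‖ ^ γ) with hK
  have hKmeas : Measurable K :=
    ENNReal.measurable_ofReal.comp (measurable_norm.pow measurable_const)
  set K1 : E3 → ℝ≥0∞ := (ball (0 : E3) 1).indicator K with hK1
  have hK1meas : Measurable K1 := hKmeas.indicator measurableSet_ball
  have hKsplit : ∀ z, K z ≤ K1 z + 1 := by
    intro z
    by_cases hz : z ∈ ball (0 : E3) 1
    · rw [hK1, Set.indicator_of_mem hz]; exact le_self_add
    · rw [hK1, Set.indicator_of_notMem hz, zero_add]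
      have h1 : (1 : ℝ) ≤ ‖z‖ := by
        simpa [mem_ball, dist_eq_norm] using hz
      exact ENNReal.ofReal_le_one.2 (Real.rpow_le_one_of_one_le_of_nonpos h1 hγ2.le)
  -- Hölder estimate for the near part
  have hKq : ∀ v : E3, (∫⁻ w, K1 (v - w) ^ q) = I := by
    intro v
    have hmq : Measurable fun z : E3 => K1 z ^ q := hK1meas.pow measurable_const
    rw [(Measure.measurePreserving_sub_left (volume : Measure E3) v).lintegral_comp hmq]
    have : ∀ z : E3, K1 z ^ q = (ball (0 : E3) 1).indicator
        (fun z => ENNReal.ofReal (‖z‖ ^ (γ * q))) z := by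
      intro z
      by_cases hz : z ∈ ball (0 : E3) 1
      · simp only [hK1, hK, Set.indicator_of_mem hz]
        rw [ENNReal.ofReal_rpow_of_nonneg (Real.rpow_nonneg (norm_nonneg z) γ) hq0.le,
            ← Real.rpow_mul (norm_nonneg z)]
      · simp only [hK1, Set.indicator_of_notMem hz]
        rw [ENNReal.zero_rpow_of_pos hq0]
    rw [lintegral_congr this]
    exact lintegral_indicator measurableSet_ball _
  have hinner : ∀ v : E3, (∫⁻ w, K1 (v - w) * F w) ≤ A * S ^ (1 / p) := by
    intro v
    have hm : Measurable fun w : E3 => K1 (v - w) :=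
      hK1meas.comp (measurable_const.sub measurable_id)
    calc (∫⁻ w, K1 (v - w) * F w)
        ≤ (∫⁻ w, K1 (v - w) ^ q) ^ (1 / q) * (∫⁻ w, F w ^ p) ^ (1 / p) := by
          simpa using ENNReal.lintegral_mul_le_Lp_mul_Lq volume hpq.symm
            hm.aemeasurable hFmeas.aemeasurable
      _ = A * S ^ (1 / p) := by rw [hKq v, hAdef, hS]
  have hinner2 : ∀ v : E3, (∫⁻ w, K (v - w) * F w) ≤ A * S ^ (1 / p) + 1 := by
    intro v
    have hm : Measurable fun w : E3 => K1 (v - w) * F w :=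
      (hK1meas.comp (measurable_const.sub measurable_id)).mul hFmeas
    calc (∫⁻ w, K (v - w) * F w)
        ≤ ∫⁻ w, (K1 (v - w) * F w + F w) := by
          apply lintegral_mono
          intro w
          calc K (v - w) * F w ≤ (K1 (v - w) + 1) * F w :=
                mul_le_mul_left (hKsplit _) _
            _ = K1 (v - w) * F w + F w := by rw [add_mul, one_mul]
      _ = (∫⁻ w, K1 (v - w) * F w) + ∫⁻ w, F w := lintegral_add_left hm _
      _ ≤ A * S ^ (1 / p) + 1 := by
          rw [hmass]
          exact add_le_add_left (hinner v) 1
  -- main chain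
  have hmain : (∫⁻ v, ∫⁻ w, ENNReal.ofReal (‖v - w‖ ^ γ * f w * f v ^ p))
      ≤ (A * S ^ (1 / p) + 1) * S := by
    calc (∫⁻ v, ∫⁻ w, ENNReal.ofReal (‖v - w‖ ^ γ * f w * f v ^ p))
        = ∫⁻ v, (∫⁻ w, K (v - w) * F w) * F v ^ p := by
          apply lintegral_congr
          intro v
          have hmeasvw : Measurable fun w : E3 => K (v - w) * F w :=
            (hKmeas.comp (measurable_const.sub measurable_id)).mul hFmeas
          rw [← lintegral_mul_const _ hmeasvw]
          apply lintegral_congr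
          intro w
          rw [ENNReal.ofReal_mul (mul_nonneg (Real.rpow_nonneg (norm_nonneg _) γ) (hf0 w)),
              ENNReal.ofReal_mul (Real.rpow_nonneg (norm_nonneg _) γ),
              ← ENNReal.ofReal_rpow_of_nonneg (hf0 v) hp0.le]
      _ ≤ ∫⁻ v, (A * S ^ (1 / p) + 1) * F v ^ p :=
          lintegral_mono fun v => mul_le_mul_left (hinner2 v) _
      _ = (A * S ^ (1 / p) + 1) * S := by rw [lintegral_const_mul _ hFpmeas]
  refine hmain.trans ?_
  -- now convert to the N form
  have hs1p : S ^ (1 / p) = N := hNS.symm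
  have hNp1 : N * N ^ p ≤ 1 + N ^ (2 * p) := by
    have : N * N ^ p = N ^ (1 + p) := by
      rw [ENNReal.rpow_add _ _ hN0 hNtop, ENNReal.rpow_one]
    rw [this]
    exact rpow_le_one_add (by linarith) (by linarith)
  have hNp2 : N ^ p ≤ 1 + N ^ (2 * p) := rpow_le_one_add hp0.le (by linarith)
  calc (A * S ^ (1 / p) + 1) * S
      = A * (N * N ^ p) + N ^ p := by
        rw [hs1p, hSN]; ring
    _ ≤ A * (1 + N ^ (2 * p)) + (1 + N ^ (2 * p)) :=
        add_le_add (mul_le_mul_right hNp1 A) hNp2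
    _ = (A + 1) * (1 + N ^ (2 * p)) := by ring
    _ ≤ ENNReal.ofReal ((A + 1).toReal + 1) * (1 + N ^ (2 * p)) := by
        gcongr
        rw [ENNReal.ofReal_add ENNReal.toReal_nonneg zero_le_one,
            ENNReal.ofReal_toReal hBlt.ne, ENNReal.ofReal_one]
        exact le_self_add

end
end

section
/- Let γ∈(−3,0), p>3/(3+γ) and T>0. Let (f_t)_{t∈[0,T]} be a family of probability densities on ℝ³ with f_t∈L^p(ℝ³) for all t, such that u(t):=‖f_t‖_{L^p}^p is differentiable on [0,T] and satisfies u′(t) ≤ 2(γ+3)(p−1) ∬_{ℝ³×ℝ³} |v−v_*|^{γ} f_t(v_*) f_t(v)^{p} dv dv_* for all t∈[0,T]. Then there exists a constant C_{γ,p}>0, depending only on γ and p, such that, setting T* := (π/2 − arctan(‖f₀‖_{L^p}^p))/C_{γ,p}, one has for all t∈[0,T] with t<T*: ‖f_t‖_{L^p}^p ≤ tan( arctan(‖f₀‖_{L^p}^p) + C_{γ,p} t ). -/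
open MeasureTheory
open scoped ENNReal

noncomputable section

open Metric Set in
lemma singular_lintegral_lt_top {s : ℝ} (hs : -3 < s) (hs0 : s < 0) :
    ∫⁻ w in ball (0:E3) 1, ENNReal.ofReal (‖w‖ ^ s) < ⊤ := by
  classical
  set ρ : ℝ := 1/2 with hρdef
  have hρ0 : (0:ℝ) < ρ := by norm_num [hρdef]
  have hρ1 : ρ < 1 := by norm_num [hρdef]
  set A : ℕ → Set E3 := fun n => {w | ρ^(n+1) ≤ ‖w‖ ∧ ‖w‖ < ρ^n} with hA
  have hfinrank : Module.finrank ℝ E3 = 3 := by simp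
  set V : ℝ≥0∞ := volume (ball (0:E3) 1) with hV
  have hVfin : V < ⊤ := measure_ball_lt_top
  -- cover
  have hcover : ball (0:E3) 1 ⊆ {0} ∪ ⋃ n, A n := by
    intro w hw
    rcases eq_or_ne w 0 with h | h
    · exact Or.inl (by simp [h])
    · right
      have h0 : 0 < ‖w‖ := norm_pos_iff.mpr h
      have h1 : ‖w‖ < 1 := by simpa using mem_ball_zero_iff.mp hw
      have hex : ∃ n, ρ^(n+1) ≤ ‖w‖ := by
        obtain ⟨n, hn⟩ := exists_pow_lt_of_lt_one h0 hρ1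
        exact ⟨n, by
          have : ρ^(n+1) ≤ ρ^n := pow_le_pow_of_le_one hρ0.le hρ1.le (Nat.le_succ n)
          linarith⟩
      set n₀ := Nat.find hex with hn₀
      refine Set.mem_iUnion.mpr ⟨n₀, ⟨Nat.find_spec hex, ?_⟩⟩
      match hm : n₀ with
      | 0 => simpa using h1
      | Nat.succ k =>
        have hk : ¬ (ρ^(k+1) ≤ ‖w‖) := Nat.find_min hex (by omega)
        push_neg at hk
        simpa using hk
  have hAsub : ∀ n, A n ⊆ ball (0:E3) (ρ^n) := by
    intro n w hw
    exact mem_ball_zero_iff.mpr hw.2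
  -- per-annulus bound
  have hAn : ∀ n : ℕ, (∫⁻ w in A n, ENNReal.ofReal (‖w‖ ^ s)) ≤
      ENNReal.ofReal ((ρ^(n+1)) ^ s) * (ENNReal.ofReal ((ρ^n) ^ 3) * V) := by
    intro n
    have hb : (∫⁻ w in A n, ENNReal.ofReal (‖w‖ ^ s)) ≤
        (∫⁻ _ in A n, ENNReal.ofReal ((ρ^(n+1)) ^ s)) := by
      apply setLIntegral_mono measurable_const
      intro w hw
      apply ENNReal.ofReal_le_ofReal
      exact Real.rpow_le_rpow_of_nonpos (pow_pos hρ0 (n+1)) hw.1 hs0.le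
    refine hb.trans ?_
    rw [setLIntegral_const]
    apply mul_le_mul_right 
    calc volume (A n) ≤ volume (ball (0:E3) (ρ^n)) := measure_mono (hAsub n)
      _ = ENNReal.ofReal ((ρ^n) ^ Module.finrank ℝ E3) * V :=
          Measure.addHaar_ball volume 0 (pow_nonneg hρ0.le n)
      _ = ENNReal.ofReal ((ρ^n) ^ 3) * V := by rw [hfinrank]
  -- geometric series identification
  have hterm : ∀ n : ℕ, ENNReal.ofReal ((ρ^(n+1)) ^ s) * (ENNReal.ofReal ((ρ^n) ^ 3) * V)
      = ENNReal.ofReal (ρ ^ s) * (ENNReal.ofReal (ρ ^ (s+3)))^n * V := by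
    intro n
    have hc : ((ρ^(n+1)) ^ s) * ((ρ^n:ℝ) ^ (3:ℕ)) = ρ ^ s * (ρ ^ (s+3))^n := by
      have e1 : ((ρ^(n+1):ℝ)) ^ s = ρ ^ (((n:ℝ)+1) * s) := by
        rw [← Real.rpow_natCast ρ (n+1), ← Real.rpow_mul hρ0.le]
        push_cast; ring_nf
      have e2 : ((ρ^n:ℝ)) ^ (3:ℕ) = ρ ^ ((n:ℝ) * 3) := by
        rw [← Real.rpow_natCast ρ n, ← Real.rpow_natCast (ρ ^ (n:ℝ)) 3,
          ← Real.rpow_mul hρ0.le]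
        norm_num
      have e3 : (ρ ^ (s+3))^n = ρ ^ ((n:ℝ) * (s+3)) := by
        rw [← Real.rpow_natCast (ρ ^ (s+3)) n, ← Real.rpow_mul hρ0.le]
        ring_nf
      rw [e1, e2, e3, ← Real.rpow_add hρ0, ← Real.rpow_add hρ0]
      ring_nf
    rw [← mul_assoc, ← ENNReal.ofReal_mul (Real.rpow_nonneg (pow_pos hρ0 (n+1)).le s), hc,
      ENNReal.ofReal_mul (Real.rpow_nonneg hρ0.le s),
      ENNReal.ofReal_pow (Real.rpow_nonneg hρ0.le (s+3))]
  -- put together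
  have hsum : (∫⁻ w in ball (0:E3) 1, ENNReal.ofReal (‖w‖ ^ s)) ≤
      ENNReal.ofReal (ρ ^ s) * (1 - ENNReal.ofReal (ρ ^ (s+3)))⁻¹ * V := by
    calc (∫⁻ w in ball (0:E3) 1, ENNReal.ofReal (‖w‖ ^ s))
        ≤ ∫⁻ w in ({0} ∪ ⋃ n, A n : Set E3), ENNReal.ofReal (‖w‖ ^ s) :=
          lintegral_mono_set hcover
      _ ≤ (∫⁻ w in ({0} : Set E3), ENNReal.ofReal (‖w‖ ^ s)) +
          ∫⁻ w in (⋃ n, A n), ENNReal.ofReal (‖w‖ ^ s) := by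
          rw [← lintegral_add_measure]
          exact lintegral_mono' (Measure.restrict_union_le _ _) le_rfl
      _ = ∫⁻ w in (⋃ n, A n), ENNReal.ofReal (‖w‖ ^ s) := by
          have h0 : (volume : Measure E3).restrict {0} = 0 :=
            Measure.restrict_eq_zero.mpr (measure_singleton 0)
          rw [h0, lintegral_zero_measure, zero_add]
      _ ≤ ∑' n, ∫⁻ w in A n, ENNReal.ofReal (‖w‖ ^ s) := lintegral_iUnion_le _ _
      _ ≤ ∑' n, ENNReal.ofReal (ρ ^ s) * (ENNReal.ofReal (ρ ^ (s+3)))^n * V := by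
          refine ENNReal.tsum_le_tsum fun n => ?_
          rw [← hterm n]; exact hAn n
      _ = ENNReal.ofReal (ρ ^ s) * (1 - ENNReal.ofReal (ρ ^ (s+3)))⁻¹ * V := by
          rw [ENNReal.tsum_mul_right, ENNReal.tsum_mul_left, ENNReal.tsum_geometric]
  refine hsum.trans_lt ?_
  have hr1 : ENNReal.ofReal (ρ ^ (s+3)) < 1 := by
    rw [← ENNReal.ofReal_one]
    exact ENNReal.ofReal_lt_ofReal_iff_of_nonneg (Real.rpow_nonneg hρ0.le _) |>.mpr
      (Real.rpow_lt_one hρ0.le hρ1 (by linarith))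
  have hinv : (1 - ENNReal.ofReal (ρ ^ (s+3)))⁻¹ < ⊤ := by
    rw [ENNReal.inv_lt_top]
    exact tsub_pos_of_lt hr1
  exact ENNReal.mul_lt_top (ENNReal.mul_lt_top ENNReal.ofReal_lt_top hinv) hVfin

set_option maxHeartbeats 1000000 in
theorem Lp_norm_local_bound
    (γ : ℝ) (hγ : γ ∈ Set.Ioo (-3 : ℝ) 0) (p : ℝ) (hp : 3 / (3 + γ) < p) :
    ∃ C : ℝ, 0 < C ∧
      ∀ (T : ℝ), 0 < T →
      ∀ (f : ℝ → E3 → ℝ) (u u' : ℝ → ℝ),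
        (∀ t ∈ Set.Icc (0:ℝ) T, (∀ v, 0 ≤ f t v) ∧ Integrable (f t) volume ∧
          (∫ v, f t v) = 1 ∧ MemLp (f t) (ENNReal.ofReal p) volume) →
        (∀ t ∈ Set.Icc (0:ℝ) T,
          u t = (eLpNorm (f t) (ENNReal.ofReal p) volume).toReal ^ p) →
        (∀ t ∈ Set.Icc (0:ℝ) T, HasDerivWithinAt u (u' t) (Set.Icc 0 T) t) →
        (∀ t ∈ Set.Icc (0:ℝ) T,
          u' t ≤ 2 * (γ + 3) * (p - 1) *
            ∫ v, ∫ w, ‖v - w‖ ^ γ * f t w * f t v ^ p) →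
        ∀ t ∈ Set.Icc (0:ℝ) T,
          t < (Real.pi / 2 - Real.arctan (u 0)) / C →
          u t ≤ Real.tan (Real.arctan (u 0) + C * t) := by
  classical
  obtain ⟨hγ1, hγ2⟩ := hγ
  have h3γ : (0:ℝ) < 3 + γ := by linarith
  have hp1 : 1 < p := lt_of_lt_of_le ((one_lt_div h3γ).mpr (by linarith)) hp.le
  have hp0 : 0 < p := by linarith
  set q : ℝ := p / (p - 1) with hqdef
  have hpq : p.HolderConjugate q := Real.HolderConjugate.conjExponent hp1
  have hq0 : 0 < q := hpq.symm.pos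
  have hγq1 : -3 < γ * q := by
    have hden : (0:ℝ) < p - 1 := by linarith
    have h3 : 3 < p * (3 + γ) := (div_lt_iff₀ h3γ).mp hp
    have : -3 < γ * p / (p - 1) := by
      rw [lt_div_iff₀ hden]; nlinarith
    calc (-3:ℝ) < γ * p / (p - 1) := this
      _ = γ * q := by rw [hqdef, mul_div_assoc]
  have hγq2 : γ * q < 0 := mul_neg_of_neg_of_pos hγ2 hq0
  set Kq : ℝ≥0∞ := ∫⁻ w in Metric.ball (0:E3) 1, ENNReal.ofReal (‖w‖ ^ (γ * q)) with hKqdef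
  have hKq : Kq < ⊤ := singular_lintegral_lt_top hγq1 hγq2
  set Kr : ℝ := (Kq ^ (1/q)).toReal with hKrdef
  have hKr0 : 0 ≤ Kr := ENNReal.toReal_nonneg
  set C : ℝ := 2 * (γ + 3) * (p - 1) * (1 + Kr) with hCdef
  have hC : 0 < C := by
    apply mul_pos (mul_pos (by linarith) (by linarith)) (by linarith)
  refine ⟨C, hC, ?_⟩
  intro T hT f u u' hfprop huval huderiv huineq
  -- ofReal p facts
  have hop : ENNReal.ofReal p ≠ 0 := by
    simp [ENNReal.ofReal_eq_zero, not_le, hp0]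
  have hop' : ENNReal.ofReal p ≠ ⊤ := ENNReal.ofReal_ne_top
  have hpt : (ENNReal.ofReal p).toReal = p := ENNReal.toReal_ofReal hp0.le
  -- key differential inequality
  have key : ∀ τ ∈ Set.Icc (0:ℝ) T, u' τ ≤ C * (1 + u τ ^ 2) := by
    intro τ hτ
    obtain ⟨hnn, hint, hmass, hmem⟩ := hfprop τ hτ
    set g : E3 → ℝ := f τ with hgdef
    have hgm : AEStronglyMeasurable g volume := hint.1
    set N : ℝ≥0∞ := eLpNorm g (ENNReal.ofReal p) volume with hNdef
    have hN : N < ⊤ := hmem.2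
    set Nr : ℝ := N.toReal with hNrdef
    have hNr0 : 0 ≤ Nr := ENNReal.toReal_nonneg
    set X : ℝ≥0∞ := ∫⁻ v, (‖g v‖₊ : ℝ≥0∞) ^ p with hXdef
    have hNX : N = X ^ (1/p) := by
      rw [hNdef, eLpNorm_eq_lintegral_rpow_enorm_toReal hop hop', hpt]; rfl
    have hXN : X = N ^ p := by
      rw [hNX, ← ENNReal.rpow_mul, one_div_mul_cancel hp0.ne', ENNReal.rpow_one]
    have hXfin : X ≠ ⊤ := by
      rw [hXN]
      exact (ENNReal.rpow_lt_top_of_nonneg hp0.le hN.ne).ne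
    have hu_eq : u τ = Nr ^ p := huval τ hτ
    have hu_X : u τ = X.toReal := by
      rw [hu_eq, hNrdef, ENNReal.toReal_rpow, ← hXN]
    -- integrability of g ^ p
    have hint_p : Integrable (fun v => g v ^ p) volume := by
      have h := hmem.integrable_norm_rpow hop hop'
      rw [hpt] at h
      exact h.congr (Filter.Eventually.of_forall fun v => by
        simp [Real.norm_of_nonneg (hnn v)])
    -- ∫ g^p = u τ
    have hIgp : (∫ v, g v ^ p) = u τ := by
      rw [integral_eq_lintegral_of_nonneg_ae
        (Filter.Eventually.of_forall fun v => Real.rpow_nonneg (hnn v) p)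
        ((hgm.aemeasurable.pow aemeasurable_const).aestronglyMeasurable)]
      have h2 : ∀ v, ENNReal.ofReal (g v ^ p) = (‖g v‖₊ : ℝ≥0∞) ^ p := fun v => by
        rw [(by exact Real.enorm_eq_ofReal (hnn v) : (‖g v‖₊ : ℝ≥0∞) = ENNReal.ofReal (g v)), ENNReal.ofReal_rpow_of_nonneg (hnn v) hp0.le]
      simp_rw [h2]
      rw [hu_X]
    -- the inner bound
    set Aen : ℝ≥0∞ := Kq ^ (1/q) * N + 1 with hAendef
    have hKq' : Kq ^ (1/q) ≠ ⊤ :=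
      (ENNReal.rpow_lt_top_of_nonneg (by positivity) hKq.ne).ne
    have hAfin : Aen ≠ ⊤ := by
      rw [hAendef]
      exact ENNReal.add_ne_top.mpr ⟨ENNReal.mul_ne_top hKq' hN.ne, ENNReal.one_ne_top⟩
    set Areal : ℝ := Aen.toReal with hArealdef
    have hAreal : Areal = Kr * Nr + 1 := by
      rw [hArealdef, hAendef, ENNReal.toReal_add (ENNReal.mul_ne_top hKq' hN.ne)
        ENNReal.one_ne_top, ENNReal.toReal_mul, ENNReal.toReal_one, hKrdef, hNrdef]
    have hAreal0 : 0 ≤ Areal := ENNReal.toReal_nonneg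
    have hgae : AEMeasurable (fun w => ENNReal.ofReal (g w)) volume :=
      hgm.aemeasurable.ennreal_ofReal
    have hinner : ∀ v : E3, (∫ w, ‖v - w‖ ^ γ * g w) ≤ Areal := by
      intro v
      have hkerm : Measurable (fun w : E3 => ‖v - w‖ ^ γ) :=
        ((measurable_const.sub measurable_id).norm).pow measurable_const
      have hmeas : AEStronglyMeasurable (fun w => ‖v - w‖ ^ γ * g w) volume :=
        hkerm.aestronglyMeasurable.mul hgm
      have hnn' : 0 ≤ᵐ[volume] (fun w => ‖v - w‖ ^ γ * g w) :=
        Filter.Eventually.of_forall fun w =>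
          mul_nonneg (Real.rpow_nonneg (norm_nonneg _) _) (hnn w)
      rw [integral_eq_lintegral_of_nonneg_ae hnn' hmeas]
      have hL : (∫⁻ w, ENNReal.ofReal (‖v - w‖ ^ γ * g w)) ≤ Aen := by
        -- pointwise splitting
        have step0 : ∀ w, ENNReal.ofReal (‖v - w‖ ^ γ * g w) ≤
            (Metric.ball v 1).indicator
              (fun w => ENNReal.ofReal (‖v - w‖ ^ γ) * ENNReal.ofReal (g w)) w
            + ENNReal.ofReal (g w) := by
          intro w
          by_cases hw : w ∈ Metric.ball v 1
          · rw [Set.indicator_of_mem hw,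
              ENNReal.ofReal_mul (Real.rpow_nonneg (norm_nonneg _) _)]
            exact le_self_add
          · rw [Set.indicator_of_notMem hw, zero_add]
            apply ENNReal.ofReal_le_ofReal
            have h1 : (1:ℝ) ≤ ‖v - w‖ := by
              rw [Metric.mem_ball, not_lt, dist_eq_norm, ← norm_sub_rev] at hw
              exact hw
            have h2 : ‖v - w‖ ^ γ ≤ 1 :=
              Real.rpow_le_one_of_one_le_of_nonpos h1 hγ2.le
            exact mul_le_of_le_one_left (hnn w) h2
        have hindm : AEMeasurable ((Metric.ball v 1).indicator
            (fun w => ENNReal.ofReal (‖v - w‖ ^ γ) * ENNReal.ofReal (g w))) volume :=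
          (hkerm.ennreal_ofReal.aemeasurable.mul hgae).indicator measurableSet_ball
        calc (∫⁻ w, ENNReal.ofReal (‖v - w‖ ^ γ * g w))
            ≤ ∫⁻ w, ((Metric.ball v 1).indicator
                (fun w => ENNReal.ofReal (‖v - w‖ ^ γ) * ENNReal.ofReal (g w)) w
              + ENNReal.ofReal (g w)) := lintegral_mono step0
          _ = (∫⁻ w, (Metric.ball v 1).indicator
                (fun w => ENNReal.ofReal (‖v - w‖ ^ γ) * ENNReal.ofReal (g w)) w)
              + ∫⁻ w, ENNReal.ofReal (g w) := lintegral_add_left' hindm _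
          _ ≤ Kq ^ (1/q) * N + 1 := by
              gcongr
              · -- Hölder + translation
                rw [lintegral_indicator measurableSet_ball _]
                have hHold := ENNReal.lintegral_mul_le_Lp_mul_Lq
                  (volume.restrict (Metric.ball v 1)) hpq.symm
                  (hkerm.ennreal_ofReal.aemeasurable.restrict)
                  (hgae.restrict)
                simp only [Pi.mul_apply] at hHold
                refine hHold.trans ?_
                have hfac1 : (∫⁻ w in Metric.ball v 1,
                    ENNReal.ofReal (‖v - w‖ ^ γ) ^ q) = Kq := by
                  have he : ∀ w : E3, ENNReal.ofReal (‖v - w‖ ^ γ) ^ q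
                      = ENNReal.ofReal (‖v - w‖ ^ (γ * q)) := by
                    intro w
                    rw [ENNReal.ofReal_rpow_of_nonneg
                      (Real.rpow_nonneg (norm_nonneg _) _) hq0.le,
                      ← Real.rpow_mul (norm_nonneg _)]
                  simp_rw [he]
                  -- translation invariance
                  have hmp := MeasureTheory.Measure.measurePreserving_sub_left
                    (volume : Measure E3) v
                  have hFm : Measurable (fun w : E3 => (Metric.ball (0:E3) 1).indicator
                      (fun w => ENNReal.ofReal (‖w‖ ^ (γ * q))) w) :=
                    ((measurable_norm.pow measurable_const).ennreal_ofReal).indicator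
                      measurableSet_ball
                  calc (∫⁻ w in Metric.ball v 1, ENNReal.ofReal (‖v - w‖ ^ (γ * q)))
                      = ∫⁻ w, (Metric.ball (0:E3) 1).indicator
                          (fun w => ENNReal.ofReal (‖w‖ ^ (γ * q))) (v - w) := by
                        rw [← lintegral_indicator measurableSet_ball _]
                        congr 1
                        funext w
                        by_cases hw : w ∈ Metric.ball v 1
                        · have hw' : v - w ∈ Metric.ball (0:E3) 1 := by
                            rw [Metric.mem_ball, dist_zero_right]
                            rw [Metric.mem_ball, dist_eq_norm, ← norm_sub_rev] at hw
                            exact hw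
                          rw [Set.indicator_of_mem hw, Set.indicator_of_mem hw']
                        · have hw' : v - w ∉ Metric.ball (0:E3) 1 := by
                            rw [Metric.mem_ball, dist_zero_right]
                            rw [Metric.mem_ball, dist_eq_norm, ← norm_sub_rev] at hw
                            exact hw
                          rw [Set.indicator_of_notMem hw, Set.indicator_of_notMem hw']
                    _ = ∫⁻ w, (Metric.ball (0:E3) 1).indicator
                          (fun w => ENNReal.ofReal (‖w‖ ^ (γ * q))) w :=
                        hmp.lintegral_comp hFm
                    _ = Kq := by
                        rw [lintegral_indicator measurableSet_ball _, hKqdef]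
                have hfac2 : (∫⁻ w in Metric.ball v 1,
                    ENNReal.ofReal (g w) ^ p) ^ (1/p) ≤ N := by
                  rw [hNX]
                  apply ENNReal.rpow_le_rpow _ (by positivity)
                  calc (∫⁻ w in Metric.ball v 1, ENNReal.ofReal (g w) ^ p)
                      ≤ ∫⁻ w, ENNReal.ofReal (g w) ^ p := setLIntegral_le_lintegral _ _
                    _ = X := by
                        rw [hXdef]
                        congr 1
                        funext w
                        rw [(by exact Real.enorm_eq_ofReal (hnn w) : (‖g w‖₊ : ℝ≥0∞) = ENNReal.ofReal (g w))]
                rw [hfac1]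
                exact mul_le_mul_right hfac2 _
              · rw [← ENNReal.ofReal_one, ← hmass]
                exact (MeasureTheory.ofReal_integral_eq_lintegral_ofReal hint
                  (Filter.Eventually.of_forall hnn)).ge
      calc (∫⁻ w, ENNReal.ofReal (‖v - w‖ ^ γ * g w)).toReal
          ≤ Aen.toReal := ENNReal.toReal_mono hAfin hL
        _ = Areal := rfl
    -- outer bound
    have houter : (∫ v, ∫ w, ‖v - w‖ ^ γ * g w * g v ^ p) ≤ Areal * u τ := by
      have hinner_eq : ∀ v : E3, (∫ w, ‖v - w‖ ^ γ * g w * g v ^ p)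
          = (∫ w, ‖v - w‖ ^ γ * g w) * g v ^ p := fun v => integral_mul_const _ _
      calc (∫ v, ∫ w, ‖v - w‖ ^ γ * g w * g v ^ p)
          = ∫ v, (∫ w, ‖v - w‖ ^ γ * g w) * g v ^ p := by
            exact integral_congr_ae (Filter.Eventually.of_forall fun v => hinner_eq v)
        _ ≤ ∫ v, Areal * g v ^ p := by
            apply integral_mono_of_nonneg
            · exact Filter.Eventually.of_forall fun v => mul_nonneg
                (integral_nonneg fun w =>
                  mul_nonneg (Real.rpow_nonneg (norm_nonneg _) _) (hnn w))
                (Real.rpow_nonneg (hnn v) p)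
            · exact hint_p.const_mul Areal
            · exact Filter.Eventually.of_forall fun v =>
                mul_le_mul_of_nonneg_right (hinner v) (Real.rpow_nonneg (hnn v) p)
        _ = Areal * ∫ v, g v ^ p := integral_const_mul Areal _
        _ = Areal * u τ := by rw [hIgp]
    -- arithmetic
    have c1pos : (0:ℝ) < 2 * (γ + 3) * (p - 1) :=
      mul_pos (by linarith) (by linarith)
    have h1 : Nr * Nr ^ p ≤ 1 + (Nr ^ p) ^ 2 := by
      rcases le_total Nr 1 with h | h
      · have hh : Nr ^ p ≤ 1 := Real.rpow_le_one hNr0 h hp0.le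
        nlinarith [Real.rpow_nonneg hNr0 p, sq_nonneg (Nr ^ p)]
      · have hh : Nr ≤ Nr ^ p := by
          nth_rewrite 1 [← Real.rpow_one Nr]
          exact Real.rpow_le_rpow_of_exponent_le h hp1.le
        nlinarith [Real.rpow_nonneg hNr0 p, sq_nonneg (Nr ^ p)]
    have h2 : Nr ^ p ≤ 1 + (Nr ^ p) ^ 2 := by nlinarith [sq_nonneg (Nr ^ p - 1)]
    have harith : Areal * u τ ≤ (1 + Kr) * (1 + u τ ^ 2) := by
      rw [hAreal, hu_eq]
      nlinarith [mul_le_mul_of_nonneg_left h1 hKr0]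
    calc u' τ ≤ 2 * (γ + 3) * (p - 1) * ∫ v, ∫ w, ‖v - w‖ ^ γ * g w * g v ^ p :=
          huineq τ hτ
      _ ≤ 2 * (γ + 3) * (p - 1) * (Areal * u τ) :=
          mul_le_mul_of_nonneg_left houter c1pos.le
      _ ≤ 2 * (γ + 3) * (p - 1) * ((1 + Kr) * (1 + u τ ^ 2)) :=
          mul_le_mul_of_nonneg_left harith c1pos.le
      _ = C * (1 + u τ ^ 2) := by rw [hCdef]; ring
  -- ODE comparison
  have hcont_u : ContinuousOn u (Set.Icc 0 T) :=
    fun x hx => (huderiv x hx).continuousWithinAt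
  set φ : ℝ → ℝ := fun s => Real.arctan (u s) - C * s with hφdef
  have hD : ∀ x ∈ Set.Ioo (0:ℝ) T,
      HasDerivAt φ (1 / (1 + u x ^ 2) * u' x - C) x := by
    intro x hx
    have h1 : HasDerivAt u (u' x) x :=
      (huderiv x (Set.Ioo_subset_Icc_self hx)).hasDerivAt (Icc_mem_nhds hx.1 hx.2)
    have h2 : HasDerivAt (fun s : ℝ => C * s) C x := by
      simpa using (hasDerivAt_id x).const_mul C
    exact ((Real.hasDerivAt_arctan (u x)).comp x h1).sub h2
  have hφant : AntitoneOn φ (Set.Icc 0 T) := by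
    apply antitoneOn_of_deriv_nonpos (convex_Icc 0 T)
    · exact (Real.continuous_arctan.comp_continuousOn hcont_u).sub
        ((continuous_const.mul continuous_id).continuousOn)
    · intro x hx
      rw [interior_Icc] at hx
      exact (hD x hx).differentiableAt.differentiableWithinAt
    · intro x hx
      rw [interior_Icc] at hx
      rw [(hD x hx).deriv]
      have hb : u' x ≤ C * (1 + u x ^ 2) := key x (Set.Ioo_subset_Icc_self hx)
      have hpos : (0:ℝ) < 1 + u x ^ 2 := by positivity
      have hle : 1 / (1 + u x ^ 2) * u' x ≤ 1 / (1 + u x ^ 2) * (C * (1 + u x ^ 2)) :=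
        mul_le_mul_of_nonneg_left hb (by positivity)
      have heq : 1 / (1 + u x ^ 2) * (C * (1 + u x ^ 2)) = C := by
        field_simp
      linarith [hle, heq ▸ hle]
  have harc : ∀ s ∈ Set.Icc (0:ℝ) T,
      Real.arctan (u s) ≤ Real.arctan (u 0) + C * s := by
    intro s hs
    have h0 : (0:ℝ) ∈ Set.Icc (0:ℝ) T := ⟨le_refl 0, hT.le⟩
    have := hφant h0 hs hs.1
    simp only [hφdef, mul_zero, sub_zero] at this
    linarith
  intro t ht htlt
  have hCt : C * t < Real.pi / 2 - Real.arctan (u 0) := by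
    rw [lt_div_iff₀ hC] at htlt
    linarith [htlt]
  have hCt0 : 0 ≤ C * t := mul_nonneg hC.le ht.1
  have hub : Real.arctan (u 0) + C * t < Real.pi / 2 := by linarith
  have hlb : -(Real.pi / 2) < Real.arctan (u 0) + C * t := by
    have := Real.neg_pi_div_two_lt_arctan (u 0)
    linarith
  calc u t = Real.tan (Real.arctan (u t)) := (Real.tan_arctan _).symm
    _ ≤ Real.tan (Real.arctan (u 0) + C * t) := by
        apply Real.strictMonoOn_tan.monotoneOn
          ⟨Real.neg_pi_div_two_lt_arctan _, Real.arctan_lt_pi_div_two _⟩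
          ⟨hlb, hub⟩ (harc t ht)

end
end
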